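/- arXiv:1503.07334 — 6 statements merged into one kernel-verified Lean document; each statement's English description precedes it below -/
import Mathlib

section
/- Let H be a finite-dimensional complex Hilbert space, X ⊆ ℂⁿ compact, and T = (T₁,…,Tₙ) a commuting tuple of bounded operators on H. Suppose that for every m ∈ ℕ there exist a finite-dimensional complex Hilbert space K, an isometry V : H → K, and commuting normal operators N = (N₁,…,Nₙ) on K admitting an orthonormal basis of joint eigenvectors whose joint eigenvalue tuples lie in X, such that q(T) = V* q(N) V for every polynomial q of total degree at most m. Then X is a complete polynomial spectral set for T: for every l ∈ ℕ and every l×l matrix Q = (q_{ij}) with entries in ℂ[z₁,…,zₙ], the block operator (q_{ij}(T)) on H ⊕ ⋯ ⊕ H (l summands) satisfies ‖(q_{ij}(T))‖ ≤ sup_{z∈X} ‖(q_{ij}(z))‖, where the right-hand norm is the operator norm on the l×l complex matrix (q_{ij}(z)). -/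
/-- Evaluation of a polynomial `q ∈ ℂ[z₁,…,zₙ]` at an (ordered) tuple of elements of a
ℂ-algebra. -/
noncomputable def mvPolyEval {n : ℕ} {A : Type*} [Ring A] [Algebra ℂ A]
    (T : Fin n → A) (q : MvPolynomial (Fin n) ℂ) : A :=
  ∑ m ∈ q.support, q.coeff m • (List.ofFn fun i => T i ^ m i).prod

/-- The block operator on the `l`-fold Hilbert-space direct sum `H ⊕ ⋯ ⊕ H` (modelled as
`PiLp 2`) associated to an `l × l` matrix of operators on `H`. -/
noncomputable def blockOp {l : ℕ} {H : Type*} [NormedAddCommGroup H] [InnerProductSpace ℂ H]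
    (A : Matrix (Fin l) (Fin l) (H →L[ℂ] H)) :
    (PiLp 2 fun _ : Fin l => H) →L[ℂ] (PiLp 2 fun _ : Fin l => H) :=
  ((PiLp.continuousLinearEquiv 2 ℂ fun _ : Fin l => H).symm.toContinuousLinearMap) ∘L
    (ContinuousLinearMap.pi fun i => ∑ j, (A i j) ∘L (ContinuousLinearMap.proj j)) ∘L
    ((PiLp.continuousLinearEquiv 2 ℂ fun _ : Fin l => H).toContinuousLinearMap)

open ContinuousLinearMap MvPolynomial

lemma blockOp_apply {l : ℕ} {H : Type*} [NormedAddCommGroup H] [InnerProductSpace ℂ H]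
    (A : Matrix (Fin l) (Fin l) (H →L[ℂ] H)) (x : PiLp 2 fun _ : Fin l => H) (i : Fin l) :
    blockOp A x i = ∑ j, A i j (x j) := by
  simp [blockOp, ContinuousLinearMap.sum_apply]

lemma pow_eigen {K : Type*} [NormedAddCommGroup K] [InnerProductSpace ℂ K]
    (A : K →L[ℂ] K) (c : ℂ) (v : K) (h : A v = c • v) (k : ℕ) :
    (A ^ k) v = c ^ k • v := by
  induction k with
  | zero => simp
  | succ k ih =>
    rw [pow_succ, pow_succ, ContinuousLinearMap.mul_apply, h, map_smul, ih, smul_smul, mul_comm]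

lemma prod_ofFn_eigen {K : Type*} [NormedAddCommGroup K] [InnerProductSpace ℂ K]
    {n : ℕ} (N : Fin n → (K →L[ℂ] K)) (c : Fin n → ℂ) (v : K)
    (h : ∀ i, N i v = c i • v) :
    (List.ofFn N).prod v = (∏ i, c i) • v := by
  induction n with
  | zero => simp
  | succ n ih =>
    rw [List.ofFn_succ, List.prod_cons, ContinuousLinearMap.mul_apply,
      ih (fun i => N i.succ) (fun i => c i.succ) (fun i => h i.succ), map_smul, h 0,
      Fin.prod_univ_succ, smul_smul, mul_comm]

lemma mvPolyEval_eigen {K : Type*} [NormedAddCommGroup K] [InnerProductSpace ℂ K]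
    {n : ℕ} (N : Fin n → (K →L[ℂ] K)) (w : Fin n → ℂ) (v : K)
    (h : ∀ i, N i v = w i • v) (q : MvPolynomial (Fin n) ℂ) :
    mvPolyEval N q v = eval w q • v := by
  rw [mvPolyEval, eval_eq', ContinuousLinearMap.sum_apply, Finset.sum_smul]
  refine Finset.sum_congr rfl fun d _ => ?_
  rw [ContinuousLinearMap.smul_apply,
    prod_ofFn_eigen _ _ _ (fun i => pow_eigen _ _ _ (h i) (d i)), smul_smul]

lemma repr_diag {K : Type*} [NormedAddCommGroup K] [InnerProductSpace ℂ K]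
    {ι : Type} [Fintype ι] [DecidableEq ι] (e : OrthonormalBasis ι ℂ K)
    (B : K →L[ℂ] K) (d : ι → ℂ) (hB : ∀ k, B (e k) = d k • e k) (v : K) (k : ι) :
    e.repr (B v) k = d k * e.repr v k := by
  conv_lhs => rw [← e.sum_repr v, map_sum]
  simp only [map_smul, hB]
  rw [map_sum]
  simp only [map_smul, OrthonormalBasis.repr_self]
  have : (∑ x : ι, e.repr v x • d x • EuclideanSpace.single x 1 : EuclideanSpace ℂ ι) k
      = ∑ x : ι, (e.repr v x • d x • (EuclideanSpace.single x 1 : EuclideanSpace ℂ ι)) k := by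
    rw [WithLp.ofLp_sum, Finset.sum_apply]
  rw [this]
  simp only [PiLp.smul_apply, EuclideanSpace.single_apply, smul_eq_mul, mul_ite, mul_one, mul_zero]
  simp [Finset.sum_ite_eq, mul_comm]

lemma norm_blockOp_diag_le {l : ℕ} {K : Type*} [NormedAddCommGroup K] [InnerProductSpace ℂ K]
    {ι : Type} [Fintype ι] [DecidableEq ι] (e : OrthonormalBasis ι ℂ K)
    (B : Matrix (Fin l) (Fin l) (K →L[ℂ] K)) (d : ι → Matrix (Fin l) (Fin l) ℂ)
    (hB : ∀ i j k, B i j (e k) = d k i j • e k)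
    (S : ℝ) (hS : 0 ≤ S) (hSd : ∀ k, ‖Matrix.toEuclideanCLM (𝕜 := ℂ) (d k)‖ ≤ S) :
    ‖blockOp B‖ ≤ S := by
  refine ContinuousLinearMap.opNorm_le_bound _ hS fun x => ?_
  set c : ι → EuclideanSpace ℂ (Fin l) := fun k => (WithLp.equiv 2 _).symm fun j => e.repr (x j) k
    with hc
  have happly : ∀ (k : ι) (i : Fin l),
      (Matrix.toEuclideanCLM (𝕜 := ℂ) (d k) (c k)) i = ∑ j, d k i j * e.repr (x j) k := by
    intro k i
    have h1 : (Matrix.toEuclideanCLM (𝕜 := ℂ) (d k) (c k)) i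
        = (Matrix.toLin' (d k) (WithLp.equiv 2 _ (c k))) i := rfl
    rw [h1, Matrix.toLin'_apply]
    simp [Matrix.mulVec, dotProduct, hc]
  have hcoord : ∀ i k, e.repr (blockOp B x i) k = ∑ j, d k i j * e.repr (x j) k := by
    intro i k
    rw [blockOp_apply, map_sum]
    have : (∑ j, e.repr (B i j (x j)) : EuclideanSpace ℂ ι) k
        = ∑ j, (e.repr (B i j (x j)) : EuclideanSpace ℂ ι) k := by
      rw [WithLp.ofLp_sum, Finset.sum_apply]
    rw [this]
    exact Finset.sum_congr rfl fun j _ => repr_diag e _ _ (fun k' => hB i j k') (x j) k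
  have h2 : ‖blockOp B x‖ ^ 2 ≤ (S * ‖x‖) ^ 2 := by
    rw [PiLp.norm_sq_eq_of_L2]
    have step1 : ∀ i, ‖blockOp B x i‖ ^ 2
        = ∑ k, ‖(Matrix.toEuclideanCLM (𝕜 := ℂ) (d k) (c k)) i‖ ^ 2 := by
      intro i
      rw [← e.repr.norm_map (blockOp B x i), PiLp.norm_sq_eq_of_L2]
      exact Finset.sum_congr rfl fun k _ => by rw [hcoord, happly]
    calc ∑ i, ‖blockOp B x i‖ ^ 2
        = ∑ i, ∑ k, ‖(Matrix.toEuclideanCLM (𝕜 := ℂ) (d k) (c k)) i‖ ^ 2 :=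
          Finset.sum_congr rfl fun i _ => step1 i
      _ = ∑ k, ∑ i, ‖(Matrix.toEuclideanCLM (𝕜 := ℂ) (d k) (c k)) i‖ ^ 2 := Finset.sum_comm
      _ = ∑ k, ‖Matrix.toEuclideanCLM (𝕜 := ℂ) (d k) (c k)‖ ^ 2 :=
          Finset.sum_congr rfl fun k _ => (PiLp.norm_sq_eq_of_L2 _ _).symm
      _ ≤ ∑ k, (S * ‖c k‖) ^ 2 := by
          refine Finset.sum_le_sum fun k _ => ?_
          have h3 : ‖Matrix.toEuclideanCLM (𝕜 := ℂ) (d k) (c k)‖ ≤ S * ‖c k‖ :=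
            le_trans ((Matrix.toEuclideanCLM (𝕜 := ℂ) (d k)).le_opNorm (c k))
              (mul_le_mul_of_nonneg_right (hSd k) (norm_nonneg _))
          exact pow_le_pow_left₀ (norm_nonneg _) h3 2
      _ = S ^ 2 * ∑ k, ‖c k‖ ^ 2 := by rw [Finset.mul_sum]; exact Finset.sum_congr rfl fun k _ => (mul_pow S _ 2)
      _ = S ^ 2 * ‖x‖ ^ 2 := by
          congr 1
          have : ∀ k, ‖c k‖ ^ 2 = ∑ j, ‖e.repr (x j) k‖ ^ 2 := by
            intro k
            rw [PiLp.norm_sq_eq_of_L2]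
            rfl
          calc ∑ k, ‖c k‖ ^ 2 = ∑ k, ∑ j, ‖e.repr (x j) k‖ ^ 2 :=
                Finset.sum_congr rfl fun k _ => this k
            _ = ∑ j, ∑ k, ‖e.repr (x j) k‖ ^ 2 := Finset.sum_comm
            _ = ∑ j, ‖x j‖ ^ 2 := Finset.sum_congr rfl fun j _ => by
                rw [← PiLp.norm_sq_eq_of_L2, e.repr.norm_map]
            _ = ‖x‖ ^ 2 := (PiLp.norm_sq_eq_of_L2 _ _).symm
      _ = (S * ‖x‖) ^ 2 := (mul_pow _ _ _).symm
  have := Real.sqrt_le_sqrt h2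
  rwa [Real.sqrt_sq (norm_nonneg _), Real.sqrt_sq (by positivity)] at this

lemma norm_blockOp_compress_le {l : ℕ} {H K : Type} [NormedAddCommGroup H]
    [InnerProductSpace ℂ H] [FiniteDimensional ℂ H] [NormedAddCommGroup K]
    [InnerProductSpace ℂ K] [FiniteDimensional ℂ K]
    (V : H →L[ℂ] K) (hV : ∀ x, ‖V x‖ = ‖x‖) (B : Matrix (Fin l) (Fin l) (K →L[ℂ] K)) :
    ‖blockOp fun i j => ContinuousLinearMap.adjoint V ∘L B i j ∘L V‖ ≤ ‖blockOp B‖ := by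
  set W : (PiLp 2 fun _ : Fin l => H) →L[ℂ] (PiLp 2 fun _ : Fin l => K) :=
    ((PiLp.continuousLinearEquiv 2 ℂ fun _ : Fin l => K).symm.toContinuousLinearMap) ∘L
      (ContinuousLinearMap.pi fun i => V ∘L (ContinuousLinearMap.proj i)) ∘L
      ((PiLp.continuousLinearEquiv 2 ℂ fun _ : Fin l => H).toContinuousLinearMap) with hWdef
  have hWapp : ∀ (x : PiLp 2 fun _ : Fin l => H) (i : Fin l), W x i = V (x i) := fun x i => rfl
  have hWiso : ∀ x, ‖W x‖ = ‖x‖ := by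
    intro x
    have h2 : ‖W x‖ ^ 2 = ‖x‖ ^ 2 := by
      rw [PiLp.norm_sq_eq_of_L2, PiLp.norm_sq_eq_of_L2]
      exact Finset.sum_congr rfl fun i _ => by rw [hWapp, hV]
    have := congrArg Real.sqrt h2
    rwa [Real.sqrt_sq (norm_nonneg _), Real.sqrt_sq (norm_nonneg _)] at this
  have key : (blockOp fun i j => ContinuousLinearMap.adjoint V ∘L B i j ∘L V)
      = ContinuousLinearMap.adjoint W ∘L blockOp B ∘L W := by
    refine ContinuousLinearMap.ext fun x => ?_
    refine ext_inner_left ℂ fun y => ?_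
    rw [ContinuousLinearMap.comp_apply, ContinuousLinearMap.comp_apply,
      ContinuousLinearMap.adjoint_inner_right]
    rw [PiLp.inner_apply, PiLp.inner_apply]
    refine Finset.sum_congr rfl fun i _ => ?_
    rw [hWapp]
    simp only [blockOp_apply]
    erw [blockOp_apply]
    rw [inner_sum, inner_sum]
    refine Finset.sum_congr rfl fun j _ => ?_
    rw [ContinuousLinearMap.comp_apply, ContinuousLinearMap.comp_apply,
      ContinuousLinearMap.adjoint_inner_right, hWapp]
  rw [key]
  have hWn : ‖W‖ ≤ 1 :=
    ContinuousLinearMap.opNorm_le_bound _ zero_le_one fun x => by rw [hWiso, one_mul]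
  have hWadj : ‖ContinuousLinearMap.adjoint W‖ = ‖W‖ :=
    LinearIsometryEquiv.norm_map ContinuousLinearMap.adjoint W
  refine ContinuousLinearMap.opNorm_le_bound _ (norm_nonneg _) fun x => ?_
  calc ‖ContinuousLinearMap.adjoint W (blockOp B (W x))‖
      ≤ ‖ContinuousLinearMap.adjoint W‖ * ‖blockOp B (W x)‖ :=
        ContinuousLinearMap.le_opNorm _ _
    _ ≤ 1 * ‖blockOp B (W x)‖ := by
        rw [hWadj]
        exact mul_le_mul_of_nonneg_right hWn (norm_nonneg _)
    _ = ‖blockOp B (W x)‖ := one_mul _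
    _ ≤ ‖blockOp B‖ * ‖W x‖ := ContinuousLinearMap.le_opNorm _ _
    _ = ‖blockOp B‖ * ‖x‖ := by rw [hWiso]

/-- If a commuting tuple `T` of operators on a finite-dimensional Hilbert
space `H` admits, for every `m ∈ ℕ`, a finite-dimensional normal `X`-`m`-dilation (commuting
normal operators with an orthonormal basis of joint eigenvectors whose joint eigenvalue tuples
lie in `X`, compressing correctly for polynomials of total degree ≤ m), then `X` is a complete
polynomial spectral set for `T`: for every `l` and every `l × l` matrix `Q` of polynomials,
`‖(Q i j (T))‖ ≤ sup_{z ∈ X} ‖(Q i j (z))‖`, where on the right the norm is the operator norm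
of the `l × l` complex matrix. -/
theorem stmt2 {n : ℕ} {H : Type} [NormedAddCommGroup H] [InnerProductSpace ℂ H]
    [FiniteDimensional ℂ H]
    (X : Set (Fin n → ℂ)) (hX : IsCompact X)
    (T : Fin n → (H →L[ℂ] H)) (hT : ∀ i j, T i * T j = T j * T i)
    (hdil : ∀ m : ℕ, ∃ (K : Type) (_ : NormedAddCommGroup K) (_ : InnerProductSpace ℂ K)
      (_ : FiniteDimensional ℂ K) (V : H →L[ℂ] K) (N : Fin n → (K →L[ℂ] K))
      (ι : Type) (_ : Fintype ι) (e : OrthonormalBasis ι ℂ K) (w : ι → Fin n → ℂ),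
      (∀ x : H, ‖V x‖ = ‖x‖) ∧
      (∀ i j, N i * N j = N j * N i) ∧
      (∀ j, w j ∈ X) ∧
      (∀ i j, N i (e j) = w j i • e j) ∧
      ∀ q : MvPolynomial (Fin n) ℂ, q.totalDegree ≤ m →
        mvPolyEval T q = ContinuousLinearMap.adjoint V ∘L mvPolyEval N q ∘L V) :
    ∀ (l : ℕ) (Q : Matrix (Fin l) (Fin l) (MvPolynomial (Fin n) ℂ)),
      ‖blockOp (fun i j => mvPolyEval T (Q i j))‖ ≤
        ⨆ z ∈ X, ‖Matrix.toEuclideanCLM (𝕜 := ℂ) (Q.map (MvPolynomial.eval z))‖ := by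
  intro l Q
  classical
  set f : (Fin n → ℂ) → ℝ :=
    fun z => ‖Matrix.toEuclideanCLM (𝕜 := ℂ) (Q.map (MvPolynomial.eval z))‖ with hf
  set S : ℝ := ⨆ z ∈ X, f z with hSdef
  have hfc : Continuous f := by
    have hlin : Continuous fun M : Matrix (Fin l) (Fin l) ℂ =>
        Matrix.toEuclideanCLM (𝕜 := ℂ) M := by
      let L : Matrix (Fin l) (Fin l) ℂ →ₗ[ℂ]
          (EuclideanSpace ℂ (Fin l) →L[ℂ] EuclideanSpace ℂ (Fin l)) :=
        { toFun := fun M => Matrix.toEuclideanCLM (𝕜 := ℂ) M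
          map_add' := fun a b => map_add _ a b
          map_smul' := fun c a => map_smul _ c a }
      exact L.continuous_of_finiteDimensional
    have hmat : Continuous fun z : Fin n → ℂ => Q.map (MvPolynomial.eval z) :=
      continuous_matrix fun i j => by
        simpa [Matrix.map_apply] using MvPolynomial.continuous_eval (p := Q i j)
    exact continuous_norm.comp (hlin.comp hmat)
  have hSnn : 0 ≤ S := Real.iSup_nonneg fun z => Real.iSup_nonneg fun _ => norm_nonneg _
  have hfS : ∀ z ∈ X, f z ≤ S := by
    intro z hz
    have hbdd : BddAbove (Set.range fun z' => ⨆ _ : z' ∈ X, f z') := by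
      obtain ⟨C, hC⟩ := (hX.image hfc).bddAbove
      refine ⟨max C 0, ?_⟩
      rintro _ ⟨z', rfl⟩
      show (⨆ _ : z' ∈ X, f z') ≤ max C 0
      by_cases h : z' ∈ X
      · rw [ciSup_pos (f := fun _ : z' ∈ X => f z') h]
        exact le_max_of_le_left (hC ⟨z', h, rfl⟩)
      · haveI : IsEmpty (z' ∈ X) := ⟨h⟩
        rw [Real.iSup_of_isEmpty]
        exact le_max_right _ _
    calc f z = ⨆ _ : z ∈ X, f z := (ciSup_pos (f := fun _ : z ∈ X => f z) hz).symm
      _ ≤ S := le_ciSup hbdd z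
  obtain ⟨K, _, _, _, V, N, ι, _, e, w, hViso, hN, hw, heig, hcomp⟩ :=
    hdil (Finset.univ.sup fun p : Fin l × Fin l => (Q p.1 p.2).totalDegree)
  have hQdeg : ∀ i j, mvPolyEval T (Q i j)
      = ContinuousLinearMap.adjoint V ∘L mvPolyEval N (Q i j) ∘L V := fun i j =>
    hcomp _ (Finset.le_sup (f := fun p : Fin l × Fin l => (Q p.1 p.2).totalDegree)
      (Finset.mem_univ (i, j)))
  calc ‖blockOp fun i j => mvPolyEval T (Q i j)‖
      = ‖blockOp fun i j => ContinuousLinearMap.adjoint V ∘L mvPolyEval N (Q i j) ∘L V‖ := by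
        have : (fun i j => mvPolyEval T (Q i j))
            = fun i j => ContinuousLinearMap.adjoint V ∘L mvPolyEval N (Q i j) ∘L V :=
          funext fun i => funext fun j => hQdeg i j
        rw [this]
    _ ≤ ‖blockOp fun i j => mvPolyEval N (Q i j)‖ :=
        norm_blockOp_compress_le V hViso _
    _ ≤ S := by
        refine norm_blockOp_diag_le e _ (fun k => Q.map (MvPolynomial.eval (w k)))
          (fun i j k => ?_) S hSnn (fun k => hfS (w k) (hw k))
        simpa [Matrix.map_apply] using
          mvPolyEval_eigen N (w k) (e k) (fun i => heig i k) (Q i j)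
end

section
/- Let N = (N₁,…,Nₙ) be a commuting tuple of bounded normal operators on a complex Hilbert space H (each Nᵢ normal and NᵢN_j = N_jNᵢ for all i, j), and let λ = (λ₁,…,λₙ) ∈ ℂⁿ. Then the operator Σ_{k=1}^{n} (N_k − λ_k)(N_k − λ_k)* is invertible in B(H) if and only if there exist operators B₁,…,Bₙ in the unital C*-algebra generated by N₁,…,Nₙ such that Σ_{k=1}^{n} B_k (N_k − λ_k) = I. -/
section Aux

lemma aux_pair_le {A : Type*} [NonUnitalRing A] [StarRing A] [PartialOrder A] [StarOrderedRing A]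
    (a b : A) : star a * b + star b * a ≤ star a * a + star b * b := by
  have h := star_mul_self_nonneg (a - b)
  rw [star_sub, sub_mul, mul_sub, mul_sub, ← sub_nonneg] at *
  convert h using 1
  abel

lemma aux_sum_sq_le {ι : Type*} {A : Type*} [Ring A] [StarRing A] [PartialOrder A]
    [StarOrderedRing A] (s : Finset ι) (a : ι → A) :
    star (∑ i ∈ s, a i) * (∑ i ∈ s, a i) ≤ 2 ^ s.card • ∑ i ∈ s, star (a i) * a i := by
  classical
  induction s using Finset.induction_on with
  | empty => simp
  | @insert j t hj ih =>
    rw [Finset.sum_insert hj, Finset.sum_insert hj, Finset.card_insert_of_notMem hj]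
    set X := star (a j) * a j with hX
    set P := ∑ i ∈ t, a i with hP
    set Q := ∑ i ∈ t, star (a i) * a i with hQ
    have hXn : 0 ≤ X := star_mul_self_nonneg _
    calc star (a j + P) * (a j + P)
        = X + (star (a j) * P + star P * a j) + star P * P := by
          rw [star_add, add_mul, mul_add, mul_add]; abel
      _ ≤ X + (X + star P * P) + star P * P :=
          add_le_add_left (add_le_add_right (aux_pair_le _ _) X) _
      _ = 2 • X + 2 • (star P * P) := by abel
      _ ≤ 2 • X + 2 • (2 ^ t.card • Q) := by gcongr
      _ = 2 • X + 2 ^ (t.card + 1) • Q := by rw [smul_smul, pow_succ']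
      _ ≤ 2 ^ (t.card + 1) • X + 2 ^ (t.card + 1) • Q := by
          gcongr
          calc 2 = 2^1 := (pow_one 2).symm
          _ ≤ 2 ^ (t.card+1) := Nat.pow_le_pow_right (by norm_num) (Nat.succ_le_succ (Nat.zero_le _))
      _ = 2 ^ (t.card + 1) • (X + Q) := (smul_add _ _ _).symm

lemma aux_algebraMap_mono {A : Type*} [Ring A] [StarRing A] [PartialOrder A]
    [StarOrderedRing A] [Algebra ℝ A] [StarModule ℝ A] {r s : ℝ} (h : r ≤ s) :
    algebraMap ℝ A r ≤ algebraMap ℝ A s := by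
  rw [← sub_nonneg, ← map_sub]
  have : algebraMap ℝ A (s - r) =
      star (algebraMap ℝ A (Real.sqrt (s - r))) * algebraMap ℝ A (Real.sqrt (s - r)) := by
    rw [IsSelfAdjoint.algebraMap A (isSelfAdjoint_iff.mpr rfl) |>.star_eq, ← map_mul,
      Real.mul_self_sqrt (by linarith)]
  rw [this]
  exact star_mul_self_nonneg _

lemma aux_normal_sub {A : Type*} [Ring A] [StarRing A] [Algebra ℂ A] [StarModule ℂ A]
    (N : A) (c : ℂ) (hN : star N * N = N * star N) :
    star (N - c • 1) * (N - c • 1) = (N - c • 1) * star (N - c • 1) := by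
  simp only [star_sub, star_smul, star_one, sub_mul, mul_sub, smul_mul_assoc,
    mul_smul_comm, mul_one, one_mul, smul_smul, hN, smul_sub]
  rw [mul_comm (star c) c]
  abel

end Aux

/-- For a commuting tuple `N = (N₁,…,Nₙ)` of bounded normal operators on a
complex Hilbert space `H` and `λ ∈ ℂⁿ`, the operator `Σ_k (N_k − λ_k)(N_k − λ_k)*` is
invertible in `B(H)` if and only if there are operators `B₁,…,Bₙ` in the unital C*-algebra
generated by `N₁,…,Nₙ` (the topological closure of the star subalgebra they generate) with
`Σ_k B_k (N_k − λ_k) = I`. -/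
theorem stmt7 {n : ℕ} {H : Type} [NormedAddCommGroup H] [InnerProductSpace ℂ H]
    [CompleteSpace H]
    (N : Fin n → (H →L[ℂ] H)) (hnormal : ∀ i, IsStarNormal (N i))
    (hcomm : ∀ i j, N i * N j = N j * N i) (lam : Fin n → ℂ) :
    IsUnit (∑ k, (N k - lam k • 1) * star (N k - lam k • 1)) ↔
    ∃ B : Fin n → (H →L[ℂ] H),
      (∀ k, B k ∈ (StarAlgebra.adjoin ℂ (Set.range N)).topologicalClosure) ∧
      ∑ k, B k * (N k - lam k • 1) = 1 := by
  set T : Fin n → (H →L[ℂ] H) := fun k => N k - lam k • 1 with hT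
  have hTnorm : ∀ k, star (T k) * T k = T k * star (T k) := fun k =>
    aux_normal_sub (N k) (lam k) ((hnormal k).star_comm_self.eq)
  set S : (H →L[ℂ] H) := ∑ k, T k * star (T k) with hS
  have hS' : S = ∑ k, star (T k) * T k := by
    rw [hS]; exact Finset.sum_congr rfl fun k _ => (hTnorm k).symm
  constructor
  · intro hU
    set 𝒜 := (StarAlgebra.adjoin ℂ (Set.range N)).topologicalClosure with h𝒜
    have hcl : IsClosed (𝒜 : Set (H →L[ℂ] H)) := StarSubalgebra.isClosed_topologicalClosure _
    have hNmem : ∀ k, N k ∈ 𝒜 := fun k =>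
      StarSubalgebra.le_topologicalClosure _ (StarAlgebra.subset_adjoin ℂ _ ⟨k, rfl⟩)
    have hTmem : ∀ k, T k ∈ 𝒜 := fun k =>
      sub_mem (hNmem k) (SMulMemClass.smul_mem _ (one_mem _))
    have hSmem : S ∈ 𝒜 := by
      rw [hS]; exact sum_mem fun k _ => mul_mem (hTmem k) (star_mem (hTmem k))
    have hUs : IsUnit (⟨S, hSmem⟩ : 𝒜) := (StarSubalgebra.coe_isUnit (hS := hcl)).mp hU
    obtain ⟨u, hu⟩ := hUs
    set v : (H →L[ℂ] H) := (((u⁻¹ : 𝒜ˣ) : 𝒜) : (H →L[ℂ] H)) with hv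
    have hvmem : v ∈ 𝒜 := SetLike.coe_mem _
    refine ⟨fun k => v * star (T k), fun k => mul_mem hvmem (star_mem (hTmem k)), ?_⟩
    have hvS : v * S = 1 := by
      have h1 : ((u⁻¹ : 𝒜ˣ) : 𝒜) * ((u : 𝒜ˣ) : 𝒜) = 1 := u.inv_mul
      rw [hu] at h1
      have h2 := congrArg (Subtype.val) h1
      simpa using h2
    calc ∑ k, v * star (T k) * T k = v * ∑ k, star (T k) * T k := by
          rw [Finset.mul_sum]; exact Finset.sum_congr rfl fun k _ => (mul_assoc _ _ _)
      _ = v * S := by rw [hS']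
      _ = 1 := hvS
  · rintro ⟨B, -, hB1⟩
    set a : Fin n → (H →L[ℂ] H) := fun k => B k * T k with ha
    have hasum : ∑ k, a k = 1 := hB1
    set M : ℝ := (∑ k, ‖B k‖ ^ 2) + 1 with hM
    have hMpos : 0 < M := by positivity
    have hstep : ∀ k, star (a k) * a k ≤ M • (star (T k) * T k) := by
      intro k
      have h1 : star (B k) * B k ≤ algebraMap ℝ (H →L[ℂ] H) M := by
        refine le_trans CStarAlgebra.star_mul_le_algebraMap_norm_sq (aux_algebraMap_mono ?_)
        rw [hM]
        have : ‖B k‖ ^ 2 ≤ ∑ j, ‖B j‖ ^ 2 :=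
          Finset.single_le_sum (f := fun j => ‖B j‖ ^ 2) (fun j _ => by positivity)
            (Finset.mem_univ k)
        linarith
      have h2 := star_left_conjugate_le_conjugate h1 (T k)
      calc star (a k) * a k = star (T k) * (star (B k) * B k) * T k := by
            show star (B k * T k) * (B k * T k) = _
            simp only [star_mul]; noncomm_ring
        _ ≤ star (T k) * algebraMap ℝ (H →L[ℂ] H) M * T k := by
            rw [mul_assoc, mul_assoc] at h2 ⊢; exact h2
        _ = M • (star (T k) * T k) := by
            rw [Algebra.algebraMap_eq_smul_one, mul_smul_comm, mul_one, smul_mul_assoc]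
    have key : (1 : (H →L[ℂ] H)) ≤ ((2 ^ n : ℕ) : ℝ) • (M • S) := by
      calc (1 : (H →L[ℂ] H)) = star (∑ k, a k) * (∑ k, a k) := by rw [hasum]; simp
        _ ≤ 2 ^ (Finset.univ : Finset (Fin n)).card • ∑ k, star (a k) * a k :=
            aux_sum_sq_le _ _
        _ ≤ 2 ^ (Finset.univ : Finset (Fin n)).card • ∑ k, M • (star (T k) * T k) :=
            nsmul_le_nsmul_right (Finset.sum_le_sum fun k _ => hstep k) _
        _ = ((2 ^ n : ℕ) : ℝ) • (M • S) := by
            set_option synthInstance.maxHeartbeats 400000 in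
            rw [Finset.card_univ, Fintype.card_fin, ← Finset.smul_sum, ← hS',
              Nat.cast_smul_eq_nsmul]
    have hCS : IsUnit ((((2 ^ n : ℕ) : ℝ) * M) • S) := by
      rw [mul_smul]
      exact CStarAlgebra.isUnit_of_le 1 key isStrictlyPositive_one
    have hc : (((2 ^ n : ℕ) : ℝ) * M) ≠ 0 := by positivity
    exact (isUnit_smul_iff (Units.mk0 _ hc) S).mp hCS
end

section
/- Let B be a d×d complex matrix and let X ⊆ ℂ be a finite nonempty set which is a polynomial spectral set for B, i.e., ‖p(B)‖ ≤ max_{x∈X} |p(x)| for every polynomial p ∈ ℂ[z], where ‖·‖ is the operator norm induced by the Euclidean inner product. Then B is normal: B B* = B* B. -/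
open Polynomial

local notation "⟪" x ", " y "⟫" => @inner ℂ _ _ x y

/-- If `‖x‖ ≤ ‖x + t • y‖` for all scalars `t`, then `x ⊥ y`. -/
lemma aux_inner_zero {E : Type*} [NormedAddCommGroup E] [InnerProductSpace ℂ E]
    {x y : E} (h : ∀ t : ℂ, ‖x‖ ≤ ‖x + t • y‖) : ⟪x, y⟫ = 0 := by
  by_cases hy : y = 0
  · simp [hy]
  by_contra hc
  set c : ℂ := ⟪x, y⟫ with hcdef
  have hny : (0:ℝ) < ‖y‖ ^ 2 := by
    have : (0:ℝ) < ‖y‖ := norm_pos_iff.mpr hy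
    positivity
  have hncpos : (0:ℝ) < ‖c‖ ^ 2 := by
    have : (0:ℝ) < ‖c‖ := norm_pos_iff.mpr hc
    positivity
  set r : ℝ := ‖c‖ ^ 2 / ‖y‖ ^ 2 with hrdef
  have hrpos : 0 < r := by positivity
  set t : ℂ := -(starRingEnd ℂ c) / ((‖y‖ : ℂ) ^ 2) with htdef
  have hyne : ((‖y‖ : ℂ) ^ 2) ≠ 0 := by
    simp only [ne_eq, pow_eq_zero_iff, Complex.ofReal_eq_zero, norm_eq_zero]
    simp [hy]
  have htc : t * c = ((-r : ℝ) : ℂ) := by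
    rw [htdef, hrdef, div_mul_eq_mul_div, neg_mul, ← Complex.normSq_eq_conj_mul_self]
    rw [Complex.normSq_eq_norm_sq]
    norm_cast
    exact neg_div _ _
  have htn : ‖t‖ ^ 2 * ‖y‖ ^ 2 = r := by
    have h1 : ‖t‖ = ‖c‖ / ‖y‖ ^ 2 := by
      rw [htdef, norm_div, norm_neg, RCLike.norm_conj]
      congr 1
      rw [norm_pow, Complex.norm_real, Real.norm_eq_abs, abs_of_nonneg (norm_nonneg y)]
    rw [h1, hrdef]
    field_simp
  have hsq : ‖x + t • y‖ ^ 2 = ‖x‖ ^ 2 - r := by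
    rw [@norm_add_sq ℂ, inner_smul_right, htc, norm_smul]
    simp only [Complex.ofReal_re, RCLike.re_to_complex]
    rw [mul_pow]
    rw [htn]
    simp [Complex.ofReal_re]
    ring
  have hle : ‖x‖ ^ 2 ≤ ‖x + t • y‖ ^ 2 := by
    have := h t
    nlinarith [norm_nonneg x, norm_nonneg (x + t • y)]
  rw [hsq] at hle
  linarith

/-- An idempotent contraction on a complex Hilbert space is self-adjoint. -/
lemma aux_sa {d : ℕ} (P : EuclideanSpace ℂ (Fin d) →L[ℂ] EuclideanSpace ℂ (Fin d))
    (hidem : P * P = P) (hnorm : ‖P‖ ≤ 1) : star P = P := by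
  have hPP : ∀ v, P (P v) = P v := by
    intro v
    have := ContinuousLinearMap.ext_iff.mp hidem v
    simpa [ContinuousLinearMap.mul_apply] using this
  have key : ∀ u v : EuclideanSpace ℂ (Fin d), P u = u → P v = 0 → ⟪u, v⟫ = 0 := by
    intro u v hu hv
    apply aux_inner_zero
    intro t
    have h1 : P (u + t • v) = u := by simp [map_add, map_smul, hu, hv]
    calc ‖u‖ = ‖P (u + t • v)‖ := by rw [h1]
    _ ≤ ‖P‖ * ‖u + t • v‖ := P.le_opNorm _
    _ ≤ 1 * ‖u + t • v‖ := mul_le_mul_of_nonneg_right hnorm (norm_nonneg _)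
    _ = ‖u + t • v‖ := one_mul _
  rw [ContinuousLinearMap.star_eq_adjoint]
  refine ((ContinuousLinearMap.eq_adjoint_iff P P).mpr ?_).symm
  intro u v
  have h1 : ⟪P u, v - P v⟫ = 0 := key (P u) (v - P v) (hPP u) (by simp [map_sub, hPP])
  have h2 : ⟪P v, u - P u⟫ = 0 := key (P v) (u - P u) (hPP v) (by simp [map_sub, hPP])
  have h2' : ⟪u - P u, P v⟫ = 0 := inner_eq_zero_symm.mp h2
  rw [inner_sub_right] at h1
  rw [inner_sub_left] at h2'
  have e1 : ⟪P u, v⟫ = ⟪P u, P v⟫ := by linear_combination h1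
  have e2 : ⟪u, P v⟫ = ⟪P u, P v⟫ := by linear_combination h2'
  rw [e1, e2]

/-- If a finite nonempty set `X ⊆ ℂ` is a polynomial spectral set for a
`d × d` complex matrix `B` (with respect to the ℓ²-operator norm, here expressed via
`Matrix.toEuclideanCLM`), then `B` is normal. -/
theorem stmt11 {d : ℕ} (B : Matrix (Fin d) (Fin d) ℂ) (X : Set ℂ)
    (hfin : X.Finite) (hne : X.Nonempty)
    (h : ∀ p : Polynomial ℂ,
      ‖Matrix.toEuclideanCLM (𝕜 := ℂ) (Polynomial.aeval B p)‖ ≤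
        ⨆ x ∈ X, ‖p.eval x‖) :
    B * B.conjTranspose = B.conjTranspose * B := by
  classical
  set s : Finset ℂ := hfin.toFinset with hs
  have hmem : ∀ x : ℂ, x ∈ s ↔ x ∈ X := fun x => hfin.mem_toFinset
  set φ := Matrix.toEuclideanCLM (𝕜 := ℂ) (n := Fin d) with hφ
  -- polynomials vanishing on X annihilate B
  have key0 : ∀ p : Polynomial ℂ, (∀ x ∈ X, p.eval x = 0) → Polynomial.aeval B p = 0 := by
    intro p hp
    have hb : (⨆ x ∈ X, ‖p.eval x‖) = 0 := by
      have h1 : ∀ x : ℂ, (⨆ _ : x ∈ X, ‖p.eval x‖) = 0 := by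
        intro x
        by_cases hx : x ∈ X
        · rw [ciSup_pos hx, hp x hx, norm_zero]
        · rw [ciSup_neg hx, Real.sSup_empty]
      simp only [h1, ciSup_const]
    have h2 := h p
    rw [hb] at h2
    have hz : φ (Polynomial.aeval B p) = 0 := norm_le_zero_iff.mp h2
    have hz2 : φ (Polynomial.aeval B p) = φ 0 := by rw [hz, map_zero]
    exact φ.injective hz2
  -- Lagrange projections
  set Q : ℂ → Matrix (Fin d) (Fin d) ℂ :=
    fun x => Polynomial.aeval B (Lagrange.basis s id x) with hQ
  have hinj : Set.InjOn (id : ℂ → ℂ) s := fun a _ b _ hab => hab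
  have hQmul : ∀ x ∈ s, ∀ y ∈ s, x ≠ y → Q x * Q y = 0 := by
    intro x hx y hy hxy
    rw [hQ, ← map_mul]
    apply key0
    intro z hz
    have hzs : z ∈ s := (hmem z).mpr hz
    rw [eval_mul]
    by_cases hzx : z = x
    · have h1 : (Lagrange.basis s id y).eval (id z) = 0 :=
        Lagrange.eval_basis_of_ne (by rw [hzx]; exact hxy.symm) hzs
      simp only [id_eq] at h1
      rw [h1, mul_zero]
    · have h1 : (Lagrange.basis s id x).eval (id z) = 0 :=
        Lagrange.eval_basis_of_ne (fun hh => hzx hh.symm) hzs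
      simp only [id_eq] at h1
      rw [h1, zero_mul]
  have hQidem : ∀ x ∈ s, Q x * Q x = Q x := by
    intro x hx
    have : Polynomial.aeval B
        (Lagrange.basis s id x * Lagrange.basis s id x - Lagrange.basis s id x) = 0 := by
      apply key0
      intro z hz
      have hzs : z ∈ s := (hmem z).mpr hz
      rw [eval_sub, eval_mul]
      rcases eq_or_ne z x with rfl | hzx
      · have h1 : (Lagrange.basis s id z).eval (id z) = 1 :=
          Lagrange.eval_basis_self hinj hzs
        simp only [id_eq] at h1
        rw [h1]; ring
      · have h1 : (Lagrange.basis s id x).eval (id z) = 0 :=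
          Lagrange.eval_basis_of_ne (Ne.symm hzx) hzs
        simp only [id_eq] at h1
        rw [h1]; ring
    rw [map_sub, map_mul] at this
    rw [hQ]
    exact sub_eq_zero.mp this
  have hQnorm : ∀ x ∈ s, ‖φ (Q x)‖ ≤ 1 := by
    intro x hx
    refine le_trans (h (Lagrange.basis s id x)) ?_
    apply ciSup_le
    intro y
    by_cases hy : y ∈ X
    · rw [ciSup_pos hy]
      have hys : y ∈ s := (hmem y).mpr hy
      rcases eq_or_ne y x with rfl | hyx
      · have h1 : (Lagrange.basis s id y).eval (id y) = 1 :=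
          Lagrange.eval_basis_self hinj hys
        simp only [id_eq] at h1
        rw [h1]; norm_num
      · have h1 : (Lagrange.basis s id x).eval (id y) = 0 :=
          Lagrange.eval_basis_of_ne (Ne.symm hyx) hys
        simp only [id_eq] at h1
        rw [h1]; norm_num
    · rw [ciSup_neg hy, Real.sSup_empty]; norm_num
  have hQsa : ∀ x ∈ s, (Q x).conjTranspose = Q x := by
    intro x hx
    have hidem : φ (Q x) * φ (Q x) = φ (Q x) := by
      rw [← map_mul, hQidem x hx]
    have hsa := aux_sa (φ (Q x)) hidem (hQnorm x hx)
    apply φ.injective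
    calc φ ((Q x).conjTranspose) = φ (star (Q x)) := rfl
    _ = star (φ (Q x)) := map_star φ _
    _ = φ (Q x) := hsa
  -- B is a combination of the projections
  have hB : B = ∑ x ∈ s, x • Q x := by
    have h0 : Polynomial.aeval B
        (Polynomial.X - ∑ x ∈ s, Polynomial.C x * Lagrange.basis s id x) = 0 := by
      apply key0
      intro z hz
      have hzs : z ∈ s := (hmem z).mpr hz
      rw [eval_sub, eval_X, eval_finset_sum]
      have : ∀ x ∈ s, (Polynomial.C x * Lagrange.basis s id x).eval z =
          if x = z then z else 0 := by
        intro x hxs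
        rw [eval_mul, eval_C]
        rcases eq_or_ne x z with rfl | hxz
        · have h1 : (Lagrange.basis s id x).eval (id x) = 1 :=
            Lagrange.eval_basis_self hinj hxs
          simp only [id_eq] at h1
          rw [h1, if_pos rfl, mul_one]
        · have h1 : (Lagrange.basis s id x).eval (id z) = 0 :=
            Lagrange.eval_basis_of_ne hxz hzs
          simp only [id_eq] at h1
          rw [h1, if_neg hxz, mul_zero]
      rw [Finset.sum_congr rfl this, Finset.sum_ite_eq' s z (fun _ => z), if_pos hzs,
        sub_self]
    rw [map_sub, map_sum, Polynomial.aeval_X] at h0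
    have h1 : ∀ x ∈ s, Polynomial.aeval B (Polynomial.C x * Lagrange.basis s id x) = x • Q x := by
      intro x hxs
      rw [map_mul, Polynomial.aeval_C, hQ, Algebra.smul_def]
    rw [Finset.sum_congr rfl h1] at h0
    exact sub_eq_zero.mp h0
  -- conjugate transpose
  have hBH : B.conjTranspose = ∑ x ∈ s, (star x) • Q x := by
    rw [hB, Matrix.conjTranspose_sum]
    apply Finset.sum_congr rfl
    intro x hx
    rw [Matrix.conjTranspose_smul, hQsa x hx]
  -- final computation
  rw [hBH, hB, Finset.sum_mul_sum, Finset.sum_mul_sum]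
  apply Finset.sum_congr rfl
  intro x hx
  rw [Finset.sum_eq_single_of_mem x hx, Finset.sum_eq_single_of_mem x hx]
  · simp only [Matrix.smul_mul, Matrix.mul_smul, smul_smul, hQidem x hx]
    rw [mul_comm]
  · intro y hy hyx
    simp only [Matrix.smul_mul, Matrix.mul_smul,
      hQmul x hx y hy (fun hh => hyx hh.symm), smul_zero]
  · intro y hy hyx
    simp only [Matrix.smul_mul, Matrix.mul_smul,
      hQmul x hx y hy (fun hh => hyx hh.symm), smul_zero]
end

section
/- Let B be a d×d complex matrix such that ‖p(B)‖ ≤ max(|p(0)|, |p(1)|) for every polynomial p ∈ ℂ[z], where ‖·‖ is the operator norm induced by the Euclidean inner product (i.e., {0,1} is a polynomial spectral set for B). Then B is an orthogonal projection: B² = B and B* = B. -/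
open scoped InnerProductSpace in
set_option maxHeartbeats 1000000 in
lemma ortho_of_norm_le {E : Type*} [NormedAddCommGroup E] [InnerProductSpace ℂ E]
    {u v : E} (h : ∀ c : ℂ, ‖u‖ ≤ ‖u + c • v‖) :
    (inner ℂ u v : ℂ) = 0 := by
  by_contra ha
  set a : ℂ := inner ℂ u v with ha'
  have habs : 0 < ‖a‖ := norm_pos_iff.mpr ha
  set t : ℝ := 1 / (‖v‖ ^ 2 + 1) with ht
  have htpos : 0 < t := by positivity
  set c : ℂ := -(t : ℂ) * (starRingEnd ℂ) a with hc
  have h1 := h c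
  have h2 : ‖u + c • v‖ ^ 2
      = ‖u‖ ^ 2 + 2 * Complex.re (inner ℂ u (c • v) : ℂ) + ‖c • v‖ ^ 2 :=
    norm_add_sq (𝕜 := ℂ) _ _
  have hre : Complex.re (inner ℂ u (c • v) : ℂ) = -t * ‖a‖ ^ 2 := by
    rw [inner_smul_right, ← ha', hc, mul_assoc, RCLike.conj_mul]
    simp [← Complex.ofReal_neg, ← Complex.ofReal_mul, ← Complex.ofReal_pow]
  have hnorm : ‖c • v‖ ^ 2 = t ^ 2 * ‖a‖ ^ 2 * ‖v‖ ^ 2 := by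
    rw [norm_smul, mul_pow]
    congr 1
    rw [hc]
    simp [mul_pow, abs_of_pos htpos]
  have hsq : ‖u‖ ^ 2 ≤ ‖u + c • v‖ ^ 2 := by
    apply pow_le_pow_left₀ (norm_nonneg _) h1
  rw [h2, hre, hnorm] at hsq
  have hkey : t * (‖v‖ ^ 2 + 1) = 1 := by
    rw [ht]
    field_simp
  nlinarith [sq_nonneg ‖a‖, sq_nonneg ‖v‖, mul_pos htpos htpos,
    mul_pos (mul_pos htpos htpos) (mul_pos habs habs)]

set_option maxHeartbeats 1000000 in
set_option synthInstance.maxHeartbeats 400000 in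
/-- If `{0, 1} ⊆ ℂ` is a polynomial spectral set for a `d × d` complex
matrix `B`, i.e. `‖p(B)‖ ≤ max (|p(0)|, |p(1)|)` for every polynomial `p` (with the
ℓ²-operator norm, here expressed via `Matrix.toEuclideanCLM`), then `B` is an orthogonal
projection: `B² = B` and `B* = B`. -/
theorem stmt12 {d : ℕ} (B : Matrix (Fin d) (Fin d) ℂ)
    (h : ∀ p : Polynomial ℂ,
      ‖Matrix.toEuclideanCLM (𝕜 := ℂ) (Polynomial.aeval B p)‖ ≤
        max ‖p.eval 0‖ ‖p.eval 1‖) :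
    B * B = B ∧ B.conjTranspose = B := by
  set T := Matrix.toEuclideanCLM (𝕜 := ℂ) B with hT
  -- B is idempotent
  have hidem : B * B = B := by
    have h1 := h (Polynomial.X ^ 2 - Polynomial.X)
    simp only [map_sub, map_pow, Polynomial.aeval_X, Polynomial.eval_sub,
      Polynomial.eval_pow, Polynomial.eval_X] at h1
    norm_num at h1
    have : Matrix.toEuclideanCLM (𝕜 := ℂ) (B ^ 2 - B) = 0 := by
      rw [← norm_le_zero_iff]
      simpa using h1
    have h0 : B ^ 2 - B = 0 := by
      exact (Matrix.toEuclideanCLM (𝕜 := ℂ)).injective (this.trans (map_zero _).symm)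
    have : B ^ 2 = B := by rwa [sub_eq_zero] at h0
    rwa [pow_two] at this
  refine ⟨hidem, ?_⟩
  -- norm of T is at most 1
  have hnorm : ‖T‖ ≤ 1 := by
    have h1 := h Polynomial.X
    simpa using h1
  have hTidem : ∀ x, T (T x) = T x := by
    intro x
    have : T * T = T := by
      rw [hT, ← map_mul, hidem]
    calc T (T x) = (T * T) x := rfl
    _ = T x := by rw [this]
  -- key orthogonality
  have hker : ∀ x y : EuclideanSpace ℂ (Fin d), T y = 0 →
      (inner ℂ (T x) y : ℂ) = 0 := by
    intro x y hy
    apply ortho_of_norm_le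
    intro c
    have : T (T x + c • y) = T x := by
      rw [map_add, map_smul, hTidem, hy, smul_zero, add_zero]
    calc ‖T x‖ = ‖T (T x + c • y)‖ := by rw [this]
    _ ≤ ‖T‖ * ‖T x + c • y‖ := T.le_opNorm _
    _ ≤ 1 * ‖T x + c • y‖ := by
        apply mul_le_mul_of_nonneg_right hnorm (norm_nonneg _)
    _ = ‖T x + c • y‖ := one_mul _
  -- T is self-adjoint
  have hsa : ∀ x y : EuclideanSpace ℂ (Fin d),
      (inner ℂ (T x) y : ℂ) = inner ℂ x (T y) := by
    intro x y
    have h1 : (inner ℂ (T x) (y - T y) : ℂ) = 0 := by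
      apply hker
      rw [map_sub, hTidem, sub_self]
    have h2 : (inner ℂ (T y) (x - T x) : ℂ) = 0 := by
      apply hker
      rw [map_sub, hTidem, sub_self]
    have h2' : (inner ℂ (x - T x) (T y) : ℂ) = 0 := by
      rw [← inner_conj_symm, h2, map_zero]
    have e1 : (inner ℂ (T x) y : ℂ) = inner ℂ (T x) (T y) := by
      have := inner_sub_right (𝕜 := ℂ) (T x) y (T y)
      rw [h1] at this
      linear_combination -this
    have e2 : (inner ℂ x (T y) : ℂ) = inner ℂ (T x) (T y) := by
      have := inner_sub_left (𝕜 := ℂ) x (T x) (T y)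
      rw [h2'] at this
      linear_combination -this
    rw [e1, e2]
  have hstar : star T = T := by
    rw [ContinuousLinearMap.star_eq_adjoint]
    exact ((ContinuousLinearMap.eq_adjoint_iff T T).mpr hsa).symm
  have h2 : Matrix.toEuclideanCLM (𝕜 := ℂ) (star B) = Matrix.toEuclideanCLM (𝕜 := ℂ) B := by
    rw [hT] at hstar
    rw [← hstar]
    exact map_star (Matrix.toEuclideanCLM (𝕜 := ℂ)) B
  have : star B = B := EquivLike.injective _ h2
  simpa [Matrix.star_eq_conjTranspose] using this
end

section
/- Let H and K be finite-dimensional complex Hilbert spaces, V : H → K an isometry, B = (B₁,…,Bₙ) a commuting tuple of operators on H, and N = (N₁,…,Nₙ) a commuting tuple of normal operators on K such that B₁^{m₁}⋯Bₙ^{mₙ} = V* N₁^{m₁}⋯Nₙ^{mₙ} V for all nonnegative integers m₁,…,mₙ. Then each B_j is normal: B_j B_j* = B_j* B_j for j = 1,…,n. -/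
local notation "⟪" x ", " y "⟫" => @inner ℂ _ _ x y

open ContinuousLinearMap

/-- trace of a CLM via the standard orthonormal basis -/
lemma trace_clm_eq_sum_inner {K : Type} [NormedAddCommGroup K] [InnerProductSpace ℂ K]
    [FiniteDimensional ℂ K] (f : K →L[ℂ] K) :
    LinearMap.trace ℂ K (f : K →ₗ[ℂ] K)
      = ∑ i, ⟪(stdOrthonormalBasis ℂ K) i, f ((stdOrthonormalBasis ℂ K) i)⟫ := by
  classical
  set b := stdOrthonormalBasis ℂ K
  rw [LinearMap.trace_eq_matrix_trace ℂ b.toBasis, Matrix.trace]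
  congr 1
  funext i
  rw [Matrix.diag_apply, LinearMap.toMatrix_apply, OrthonormalBasis.coe_toBasis_repr_apply,
    OrthonormalBasis.repr_apply_apply]
  rfl

/-- a self-adjoint-free statement: if the trace of (star D) * D vanishes, D = 0 -/
lemma clm_eq_zero_of_trace_star_mul {K : Type} [NormedAddCommGroup K] [InnerProductSpace ℂ K]
    [FiniteDimensional ℂ K] (D : K →L[ℂ] K)
    (h : LinearMap.trace ℂ K ((star D * D : K →L[ℂ] K) : K →ₗ[ℂ] K) = 0) : D = 0 := by
  classical
  set b := stdOrthonormalBasis ℂ K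
  rw [trace_clm_eq_sum_inner] at h
  have h2 : ∀ i, ⟪b i, (star D * D) (b i)⟫ = (‖D (b i)‖ ^ 2 : ℝ) := by
    intro i
    have : (star D * D) (b i) = (adjoint D) (D (b i)) := by
      rw [star_eq_adjoint]; rfl
    rw [this, adjoint_inner_right, inner_self_eq_norm_sq_to_K]
    norm_num
  rw [Finset.sum_congr rfl (fun i _ => h2 i)] at h
  have h3 : ∑ i, (‖D (b i)‖ ^ 2 : ℝ) = 0 := by
    exact_mod_cast h
  have h4 : ∀ i, D (b i) = 0 := by
    intro i
    have := (Finset.sum_eq_zero_iff_of_nonneg (fun i _ => sq_nonneg ‖D (b i)‖)).mp h3 i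
      (Finset.mem_univ i)
    simpa [pow_eq_zero_iff, norm_eq_zero] using this
  apply ContinuousLinearMap.coe_injective
  apply Module.Basis.ext b.toBasis
  intro i
  simpa using h4 i

/-- In finite dimensions, an invariant subspace of a normal operator is invariant
under the adjoint as well. -/
lemma normal_invariant_adjoint {K : Type} [NormedAddCommGroup K] [InnerProductSpace ℂ K]
    [FiniteDimensional ℂ K] (T : K →L[ℂ] K) (hT : star T * T = T * star T)
    (U : Submodule ℂ K) (hU : ∀ x ∈ U, T x ∈ U) :
    ∀ x ∈ U, adjoint T x ∈ U := by
  classical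
  set P : K →L[ℂ] K := U.subtypeL ∘L U.orthogonalProjectionOnto with hPdef
  have hPmem : ∀ x : K, P x ∈ U := fun x => (U.orthogonalProjectionOnto x).2
  have hPid : ∀ x ∈ U, P x = x := by
    intro x hx
    have := Submodule.orthogonalProjectionOnto_mem_subspace_eq_self (K := U) ⟨x, hx⟩
    simpa [hPdef] using congrArg (Subtype.val) this
  have hPP : P * P = P := by
    ext x; exact hPid _ (hPmem x)
  have hPstar : star P = P := isSelfAdjoint_starProjection U
  have hTP : P * T * P = T * P := by
    ext x; exact hPid _ (hU _ (hPmem x))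
  -- the off-diagonal corner
  set D : K →L[ℂ] K := (1 - P) * (star T) * P with hDdef
  have hstarD : star D = P * T * (1 - P) := by
    simp [hDdef, star_mul, hPstar, mul_assoc]
  -- trace computation
  set τ : (K →L[ℂ] K) → ℂ := fun g => LinearMap.trace ℂ K (g : K →ₗ[ℂ] K) with hτdef
  have hτadd : ∀ f g : K →L[ℂ] K, τ (f - g) = τ f - τ g := by
    intro f g
    have : ((f - g : K →L[ℂ] K) : K →ₗ[ℂ] K) = (f : K →ₗ[ℂ] K) - g := rfl
    simp [hτdef, this]
  have hτcyc : ∀ f g : K →L[ℂ] K, τ (f * g) = τ (g * f) := by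
    intro f g
    have h1 : ((f * g : K →L[ℂ] K) : K →ₗ[ℂ] K) = (f : K →ₗ[ℂ] K) * g := rfl
    have h2 : ((g * f : K →L[ℂ] K) : K →ₗ[ℂ] K) = (g : K →ₗ[ℂ] K) * f := rfl
    simp only [hτdef, h1, h2, LinearMap.trace_mul_comm]
  have hsDD : star D * D = P * T * (star T) * P - P * T * P * (star T) * P := by
    rw [hstarD, hDdef]
    have h1 : (1 - P) * ((1 - P) * star T * P) = (1 - P) * star T * P := by
      have h2 : (1 - P) * (1 - P) = (1 - P) := by
        simp [sub_mul, mul_sub, hPP]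
      rw [← mul_assoc, ← mul_assoc, h2]
    calc P * T * (1 - P) * ((1 - P) * star T * P)
        = P * T * ((1 - P) * ((1 - P) * star T * P)) := by noncomm_ring
      _ = P * T * ((1 - P) * star T * P) := by rw [h1]
      _ = P * T * star T * P - P * T * P * star T * P := by noncomm_ring
  have htrace : τ (star D * D) = 0 := by
    rw [hsDD, hτadd]
    have e1 : τ (P * T * star T * P) = τ (T * P * star T) := by
      have a1 : P * T * star T * P = P * (T * star T * P) := by noncomm_ring
      have a2 : (T * star T * P) * P = T * star T * P := by
        rw [show (T * star T * P) * P = T * star T * (P * P) from by noncomm_ring, hPP]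
      have a3 : star T * T * P = star T * (P * T * P) := by rw [hTP]; noncomm_ring
      have a4 : (P * T * P) * star T = T * P * star T := by rw [hTP]
      rw [a1, hτcyc, a2, ← hT, a3, hτcyc, a4]
    have e2 : τ (P * T * P * star T * P) = τ (T * P * star T) := by
      rw [hTP]
      have c1 : T * P * star T * P = (T * P * star T) * P := by noncomm_ring
      rw [c1, hτcyc]
      have c2 : P * (T * P * star T) = (P * T * P) * star T := by noncomm_ring
      rw [c2, hTP]
    rw [e1, e2, sub_self]
  have hD0 : D = 0 := clm_eq_zero_of_trace_star_mul D htrace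
  -- conclude
  intro x hx
  have hDx : D x = 0 := by rw [hD0]; rfl
  have h7 : star T (P x) - P (star T (P x)) = 0 := by
    simpa [hDdef, ContinuousLinearMap.mul_apply, ContinuousLinearMap.sub_apply,
      ContinuousLinearMap.one_apply] using hDx
  have h5 : star T (P x) = P (star T (P x)) := sub_eq_zero.mp h7
  have hmem : (star T) (P x) ∈ U := by rw [h5]; exact hPmem _
  rw [← star_eq_adjoint]
  rw [hPid x hx] at hmem
  exact hmem

/-- product of a list `ofFn f` where all entries except `j` are `1`. -/
lemma list_ofFn_prod_single {M : Type*} [Monoid M] :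
    ∀ {n : ℕ} (f : Fin n → M) (j : Fin n), (∀ i, i ≠ j → f i = 1) →
      (List.ofFn f).prod = f j := by
  intro n
  induction n with
  | zero => exact fun f j _ => j.elim0
  | succ n ih =>
    intro f j hf
    rw [List.ofFn_succ, List.prod_cons]
    by_cases h0 : j = 0
    · subst h0
      have htail : (List.ofFn fun i : Fin n => f i.succ) = List.replicate n 1 := by
        rw [show (fun i : Fin n => f i.succ) = fun _ => 1 from
          funext fun i => hf i.succ (Fin.succ_ne_zero i), List.ofFn_const]
      rw [htail, List.prod_replicate, one_pow, mul_one]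
    · obtain ⟨k, rfl⟩ : ∃ k : Fin n, j = k.succ := ⟨j.pred h0, (Fin.succ_pred j h0).symm⟩
      rw [hf 0 (Ne.symm (Fin.succ_ne_zero k)), one_mul]
      exact ih (fun i => f i.succ) k fun i hik =>
        hf i.succ (fun h => hik (Fin.succ_injective n h))

/-- If a commuting tuple `B` of operators on a finite-dimensional Hilbert
space `H` has a dilation by a commuting tuple `N` of normal operators on a finite-dimensional
Hilbert space `K` (via an isometry `V : H → K`, with all monomials compressing correctly),
then each `B_j` is normal. -/
theorem stmt13 {n : ℕ} {H K : Type}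
    [NormedAddCommGroup H] [InnerProductSpace ℂ H] [FiniteDimensional ℂ H]
    [NormedAddCommGroup K] [InnerProductSpace ℂ K] [FiniteDimensional ℂ K]
    (V : H →L[ℂ] K) (hV : ∀ x : H, ‖V x‖ = ‖x‖)
    (B : Fin n → (H →L[ℂ] H)) (hB : ∀ i j, B i * B j = B j * B i)
    (N : Fin n → (K →L[ℂ] K)) (hNcomm : ∀ i j, N i * N j = N j * N i)
    (hNnormal : ∀ i, IsStarNormal (N i))
    (hdil : ∀ m : Fin n → ℕ,
      (List.ofFn fun i => B i ^ m i).prod =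
        ContinuousLinearMap.adjoint V ∘L (List.ofFn fun i => N i ^ m i).prod ∘L V) :
    ∀ j, B j * star (B j) = star (B j) * B j := by
  classical
  intro j
  -- single-variable dilation identities
  have hpow : ∀ m : ℕ, B j ^ m = adjoint V ∘L (N j ^ m) ∘L V := by
    intro m
    have h1 := hdil (Pi.single j m)
    have haB : ∀ i, i ≠ j → B i ^ Pi.single j m i = 1 := fun i hij => by
      rw [Pi.single_eq_of_ne hij, pow_zero]
    have haN : ∀ i, i ≠ j → N i ^ Pi.single j m i = 1 := fun i hij => by
      rw [Pi.single_eq_of_ne hij, pow_zero]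
    have h2 : (List.ofFn fun i => B i ^ Pi.single j m i).prod = B j ^ m := by
      rw [list_ofFn_prod_single _ j haB, Pi.single_eq_same]
    have h3 : (List.ofFn fun i => N i ^ Pi.single j m i).prod = N j ^ m := by
      rw [list_ofFn_prod_single _ j haN, Pi.single_eq_same]
    rw [h2, h3] at h1
    exact h1
  -- isometry facts
  have hVi : ∀ x y : H, ⟪V x, V y⟫ = ⟪x, y⟫ := fun x y =>
    LinearIsometry.inner_map_map ⟨V.toLinearMap, hV⟩ x y
  have hVadjV : ∀ x : H, adjoint V (V x) = x := by
    intro x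
    apply ext_inner_right ℂ
    intro y
    rw [ContinuousLinearMap.adjoint_inner_left, hVi]
  have hVinj : Function.Injective V := by
    intro a b hab
    have h0 : ‖a - b‖ = 0 := by rw [← hV, map_sub, hab, sub_self, norm_zero]
    rw [norm_eq_zero, sub_eq_zero] at h0
    exact h0
  have hcomp : ∀ (m : ℕ) (x : H), adjoint V ((N j ^ m) (V x)) = (B j ^ m) x := by
    intro m x; rw [hpow m]; rfl
  have hBadjx : ∀ x, adjoint (B j) x = adjoint V (adjoint (N j) (V x)) := by
    intro x
    apply ext_inner_right ℂ
    intro y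
    rw [ContinuousLinearMap.adjoint_inner_left, ContinuousLinearMap.adjoint_inner_left,
      ContinuousLinearMap.adjoint_inner_left]
    have hb : B j y = adjoint V (N j (V y)) := by
      have := hpow 1; rw [pow_one, pow_one] at this; rw [this]; rfl
    rw [hb, ContinuousLinearMap.adjoint_inner_right]
  -- the invariant subspace generated by the range of V
  set W : Submodule ℂ K := Submodule.span ℂ {y : K | ∃ (m : ℕ) (x : H), y = (N j ^ m) (V x)}
    with hWdef
  have hgen : ∀ (m : ℕ) (x : H), (N j ^ m) (V x) ∈ W := fun m x =>
    Submodule.subset_span ⟨m, x, rfl⟩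
  have hWrange : ∀ x : H, V x ∈ W := by
    intro x
    have := hgen 0 x
    simpa using this
  have hsucc : ∀ (m : ℕ) (x : H), N j ((N j ^ m) (V x)) = (N j ^ (m + 1)) (V x) := by
    intro m x; rw [pow_succ']; rfl
  have hWT : ∀ y ∈ W, N j y ∈ W := by
    intro y hy
    induction hy using Submodule.span_induction with
    | mem y hy =>
      obtain ⟨m, x, rfl⟩ := hy
      rw [hsucc]
      exact hgen _ _
    | zero => simp
    | add a c ha hc iha ihc => rw [map_add]; exact W.add_mem iha ihc
    | smul r a ha iha => rw [map_smul]; exact W.smul_mem r iha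
  -- the key compression identity on W
  have hkey : ∀ y ∈ W, ∀ x : H, ⟪N j y, V x⟫ = ⟪y, V (adjoint (B j) x)⟫ := by
    intro y hy
    induction hy using Submodule.span_induction with
    | mem y hy =>
      obtain ⟨m, z, rfl⟩ := hy
      intro x
      rw [hsucc, ← ContinuousLinearMap.adjoint_inner_left V, hcomp (m + 1) z]
      have l2 : (B j ^ (m + 1)) z = B j ((B j ^ m) z) := by rw [pow_succ']; rfl
      rw [l2, ← ContinuousLinearMap.adjoint_inner_right (B j), ← hcomp m z,
        ContinuousLinearMap.adjoint_inner_left V]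
    | zero => intro x; simp
    | add a c ha hc iha ihc => intro x; rw [map_add, inner_add_left, inner_add_left, iha x, ihc x]
    | smul r a ha iha => intro x; rw [map_smul, inner_smul_left, inner_smul_left, iha x]
  set R : Submodule ℂ K := LinearMap.range (V : H →ₗ[ℂ] K) with hRdef
  set M2 : Submodule ℂ K := W ⊓ Rᗮ with hM2def
  have hM2T : ∀ y ∈ M2, N j y ∈ M2 := by
    intro y hy
    obtain ⟨hyW, hyR⟩ := Submodule.mem_inf.mp hy
    rw [Submodule.mem_inf]
    refine ⟨hWT y hyW, ?_⟩
    rw [Submodule.mem_orthogonal']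
    rintro _ ⟨x, rfl⟩
    rw [ContinuousLinearMap.coe_coe, hkey y hyW x]
    exact (Submodule.mem_orthogonal' R y).mp hyR _ (LinearMap.mem_range.mpr ⟨_, rfl⟩)
  have hTnorm : star (N j) * N j = N j * star (N j) := (hNnormal j).star_comm_self
  have hWT' : ∀ y ∈ W, adjoint (N j) y ∈ W := normal_invariant_adjoint (N j) hTnorm W hWT
  have hM2T' : ∀ y ∈ M2, adjoint (N j) y ∈ M2 := normal_invariant_adjoint (N j) hTnorm M2 hM2T
  -- W ⊓ M2ᗮ ≤ R
  have hWM2 : ∀ z, z ∈ W → z ∈ M2ᗮ → z ∈ R := by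
    intro z hzW hzM2
    set u : K := z - V (adjoint V z) with hudef
    have huW : u ∈ W := W.sub_mem hzW (hWrange _)
    have huR : u ∈ Rᗮ := by
      rw [Submodule.mem_orthogonal]
      rintro _ ⟨x, rfl⟩
      rw [hudef, inner_sub_right, ContinuousLinearMap.coe_coe, hVi, ContinuousLinearMap.adjoint_inner_right, sub_self]
    have huM2 : u ∈ M2 := Submodule.mem_inf.mpr ⟨huW, huR⟩
    have hVz : V (adjoint V z) ∈ M2ᗮ := by
      rw [Submodule.mem_orthogonal]
      intro m hm
      exact (Submodule.mem_orthogonal' R m).mp (Submodule.mem_inf.mp hm).2 _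
        (LinearMap.mem_range.mpr ⟨_, rfl⟩)
    have huM2' : u ∈ M2ᗮ := by rw [hudef]; exact Submodule.sub_mem _ hzM2 hVz
    have hu0 : u = 0 := by
      have h0 : ⟪u, u⟫ = 0 := (Submodule.mem_orthogonal' M2 u).mp huM2' u huM2
      exact inner_self_eq_zero.mp h0
    rw [hudef, sub_eq_zero] at hu0
    rw [hu0]
    exact LinearMap.mem_range.mpr ⟨_, rfl⟩
  have hNVmem : ∀ x : H, N j (V x) ∈ R := by
    intro x
    apply hWM2 _ (hWT _ (hWrange x))
    rw [Submodule.mem_orthogonal']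
    intro m hm
    have h1 : adjoint (N j) m ∈ Rᗮ := (Submodule.mem_inf.mp (hM2T' m hm)).2
    rw [← ContinuousLinearMap.adjoint_inner_right (N j)]
    exact (Submodule.mem_orthogonal R _).mp h1 _ (LinearMap.mem_range.mpr ⟨x, rfl⟩)
  have hNVmem' : ∀ x : H, adjoint (N j) (V x) ∈ R := by
    intro x
    apply hWM2 _ (hWT' _ (hWrange x))
    rw [Submodule.mem_orthogonal']
    intro m hm
    have h1 : N j m ∈ Rᗮ := (Submodule.mem_inf.mp (hM2T m hm)).2
    rw [ContinuousLinearMap.adjoint_inner_left]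
    exact (Submodule.mem_orthogonal R _).mp h1 _ (LinearMap.mem_range.mpr ⟨x, rfl⟩)
  -- the intertwining identities
  have hNV : ∀ x, N j (V x) = V (B j x) := by
    intro x
    obtain ⟨y, hy⟩ := LinearMap.mem_range.mp (hNVmem x)
    have hb : B j x = y := by
      have hB1 : B j x = adjoint V (N j (V x)) := by
        have := hpow 1; rw [pow_one, pow_one] at this; rw [this]; rfl
      rw [hB1, ← hy, ContinuousLinearMap.coe_coe, hVadjV]
    rw [← hy, hb, ContinuousLinearMap.coe_coe]
  have hNV' : ∀ x, adjoint (N j) (V x) = V (adjoint (B j) x) := by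
    intro x
    obtain ⟨y, hy⟩ := LinearMap.mem_range.mp (hNVmem' x)
    have hb : adjoint (B j) x = y := by
      rw [hBadjx, ← hy, ContinuousLinearMap.coe_coe, hVadjV]
    rw [← hy, hb, ContinuousLinearMap.coe_coe]
  -- conclude
  ext x
  apply hVinj
  rw [ContinuousLinearMap.mul_apply, ContinuousLinearMap.mul_apply,
    ContinuousLinearMap.star_eq_adjoint]
  calc V (B j (adjoint (B j) x))
      = N j (V (adjoint (B j) x)) := (hNV _).symm
    _ = N j (adjoint (N j) (V x)) := by rw [hNV']
    _ = adjoint (N j) (N j (V x)) := by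
        have h := congrArg (fun f : K →L[ℂ] K => f (V x)) hTnorm
        simpa [ContinuousLinearMap.mul_apply, ContinuousLinearMap.star_eq_adjoint] using h.symm
    _ = adjoint (N j) (V (B j x)) := by rw [hNV]
    _ = V (adjoint (B j) (B j x)) := hNV' _
end

section
/- Let A ∈ M_d(ℂ) be a lower triangular Toeplitz matrix, i.e., there exist a₀,…,a_{d−1} ∈ ℂ with A_{ij} = a_{i−j} for i ≥ j and A_{ij} = 0 for i < j, and suppose A is a contraction (its ℓ²-operator norm is at most 1). Then there exists a function φ holomorphic on the open unit disc 𝔻 with sup_{z∈𝔻} |φ(z)| ≤ 1 whose Taylor coefficients at 0 satisfy φ̂(k) = a_k for k = 0,…,d−1; equivalently, writing S_d for the d×d nilpotent shift matrix ((S_d)_{ij} = 1 if i = j+1, else 0), one has φ(S_d) := Σ_{k=0}^{d−1} φ̂(k) S_d^k = A. -/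
open Finset

/-! ### Iterated derivative helper lemmas -/

private lemma iD_congr {f g : ℂ → ℂ} {s : Set ℂ} (hs : IsOpen s) (hfg : ∀ z ∈ s, f z = g z)
    (n : ℕ) : ∀ z ∈ s, iteratedDeriv n f z = iteratedDeriv n g z := by
  induction n with
  | zero => simpa using hfg
  | succ n ih =>
      intro z hz
      rw [iteratedDeriv_succ, iteratedDeriv_succ]
      apply Filter.EventuallyEq.deriv_eq
      filter_upwards [hs.mem_nhds hz] with w hw using ih w hw

private lemma iD_diff {f : ℂ → ℂ} {s : Set ℂ} (hs : IsOpen s) (hf : DifferentiableOn ℂ f s)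
    (n : ℕ) : AnalyticOnNhd ℂ (iteratedDeriv n f) s := by
  induction n with
  | zero => simpa using hf.analyticOnNhd hs
  | succ n ih => rw [iteratedDeriv_succ]; exact ih.deriv

private lemma iD_mul {f g : ℂ → ℂ} {s : Set ℂ} (hs : IsOpen s) (hf : DifferentiableOn ℂ f s)
    (hg : DifferentiableOn ℂ g s) (n : ℕ) : ∀ z ∈ s,
    iteratedDeriv n (fun w => f w * g w) z
      = ∑ k ∈ range (n + 1), (n.choose k : ℂ) *
          (iteratedDeriv k f z * iteratedDeriv (n - k) g z) := by
  induction n with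
  | zero => intro z hz; simp
  | succ n ih =>
      intro z hz
      rw [iteratedDeriv_succ]
      have h1 : deriv (iteratedDeriv n (fun w => f w * g w)) z
          = deriv (fun w => ∑ k ∈ range (n + 1),
              (n.choose k : ℂ) * (iteratedDeriv k f w * iteratedDeriv (n - k) g w)) z := by
        apply Filter.EventuallyEq.deriv_eq
        filter_upwards [hs.mem_nhds hz] with w hw using ih w hw
      rw [h1]
      have hdiff : ∀ (h : ℂ → ℂ), DifferentiableOn ℂ h s → ∀ m : ℕ,
          DifferentiableAt ℂ (iteratedDeriv m h) z :=
        fun h hh m => ((iD_diff hs hh m) z hz).differentiableAt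
      rw [deriv_fun_sum (fun k _ => by
        apply DifferentiableAt.const_mul
        exact ((hdiff f hf k).mul (hdiff g hg (n - k))))]
      have hterm : ∀ k ∈ range (n+1),
          deriv (fun w => (n.choose k : ℂ) * (iteratedDeriv k f w * iteratedDeriv (n - k) g w)) z
          = (n.choose k : ℂ) * (iteratedDeriv (k+1) f z * iteratedDeriv (n - k) g z
              + iteratedDeriv k f z * iteratedDeriv (n - k + 1) g z) := by
        intro k _
        rw [deriv_const_mul _ ((hdiff f hf k).fun_mul (hdiff g hg (n - k))),
          deriv_fun_mul (hdiff f hf k) (hdiff g hg (n - k)), ← iteratedDeriv_succ, ← iteratedDeriv_succ]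
      rw [sum_congr rfl hterm]
      have comb : ∑ k ∈ range (n+1), (n.choose k : ℂ) *
            (iteratedDeriv (k+1) f z * iteratedDeriv (n-k) g z
              + iteratedDeriv k f z * iteratedDeriv (n-k+1) g z)
          = ∑ k ∈ range (n+1+1), ((n+1).choose k : ℂ) *
              (iteratedDeriv k f z * iteratedDeriv (n+1-k) g z) := by
        rw [Finset.sum_choose_succ_mul
          (fun i j => iteratedDeriv i f z * iteratedDeriv j g z) n]
        rw [← Finset.sum_add_distrib]
        apply Finset.sum_congr rfl
        intro k hk
        have hk' : k ≤ n := Nat.lt_succ_iff.mp (mem_range.mp hk)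
        have hidx : n - k + 1 = n + 1 - k := by omega
        rw [hidx]; ring
      rw [comb]

private lemma iD_const (c : ℂ) (n : ℕ) (z : ℂ) :
    iteratedDeriv n (fun _ : ℂ => c) z = if n = 0 then c else 0 := by
  induction n generalizing c z with
  | zero => simp
  | succ n ih =>
      rw [iteratedDeriv_succ']
      have : deriv (fun _ : ℂ => c) = fun _ : ℂ => (0 : ℂ) := by
        funext w; exact deriv_const (𝕜 := ℂ) w c
      rw [this, ih]
      simp

private lemma iD_const_mul (c : ℂ) (f : ℂ → ℂ) (n : ℕ) :
    iteratedDeriv n (fun w => c * f w) = fun z => c * iteratedDeriv n f z := by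
  induction n generalizing f with
  | zero => simp [iteratedDeriv_zero]
  | succ n ih =>
      rw [iteratedDeriv_succ']
      have : deriv (fun w => c * f w) = fun w => c * deriv f w := by
        funext w; exact deriv_const_mul_field c
      rw [this, ih (deriv f), iteratedDeriv_succ']

private lemma iD_const_add (c : ℂ) (f : ℂ → ℂ) (n : ℕ) :
    iteratedDeriv (n+1) (fun w => c + f w) = iteratedDeriv (n+1) f := by
  rw [iteratedDeriv_succ', iteratedDeriv_succ', deriv_const_add']

private lemma iD_id (n : ℕ) (z : ℂ) :
    iteratedDeriv n (fun w : ℂ => w) z = if n = 0 then z else if n = 1 then 1 else 0 := by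
  match n with
  | 0 => simp
  | 1 => simp [iteratedDeriv_one]
  | (m+2) =>
      rw [iteratedDeriv_succ']
      have : deriv (fun w : ℂ => w) = fun _ : ℂ => (1:ℂ) := by
        funext w; simp
      rw [this, iD_const]
      simp

/-! ### The Schur recursion -/

private noncomputable def schurB (γ : ℂ) (a : ℕ → ℂ) : ℕ → ℂ
  | n => (1 - γ * (starRingEnd ℂ) γ)⁻¹ *
      (a (n+1) + (starRingEnd ℂ) γ * ∑ l : Fin n, a (n - (l:ℕ)) * schurB γ a l)
  decreasing_by exact l.2

private lemma schurB_eq (γ : ℂ) (a : ℕ → ℂ) (n : ℕ) :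
    schurB γ a n = (1 - γ * (starRingEnd ℂ) γ)⁻¹ *
      (a (n+1) + (starRingEnd ℂ) γ * ∑ l ∈ range n, a (n - l) * schurB γ a l) := by
  rw [schurB]
  rw [Fin.sum_univ_eq_sum_range (fun l => a (n - l) * schurB γ a l) n]

private lemma schurB_rec (γ : ℂ) (a : ℕ → ℂ) (hγ : 1 - γ * (starRingEnd ℂ) γ ≠ 0)
    (ha0 : a 0 = γ) (n : ℕ) :
    a (n+1) + (starRingEnd ℂ) γ * ∑ l ∈ range (n+1), a (n - l) * schurB γ a l = schurB γ a n := by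
  have h2 : (1 - γ * (starRingEnd ℂ) γ) * schurB γ a n
      = a (n+1) + (starRingEnd ℂ) γ * ∑ l ∈ range n, a (n - l) * schurB γ a l := by
    rw [schurB_eq]; field_simp
  rw [sum_range_succ, Nat.sub_self, ha0]
  linear_combination -h2

/-! ### The matrix identity -/

private lemma matId (d : ℕ) (aa b : ℕ → ℂ) (γ : ℂ) (ha0 : aa 0 = γ)
    (hrec : ∀ n, aa (n+1) + (starRingEnd ℂ) γ * ∑ l ∈ range (n+1), aa (n - l) * b l = b n) :
    (Matrix.of fun i j : Fin (d+1) => if (j:ℕ) ≤ i then aa (i - j) else 0) *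
      (1 + (starRingEnd ℂ) γ • Matrix.of fun i j : Fin (d+1) => if (j:ℕ) < i then b (i - j - 1) else 0)
    = γ • (1 : Matrix (Fin (d+1)) (Fin (d+1)) ℂ)
      + Matrix.of fun i j : Fin (d+1) => if (j:ℕ) < i then b (i - j - 1) else 0 := by
  ext i j
  rw [Matrix.mul_apply]
  simp only [Matrix.add_apply, Matrix.smul_apply, Matrix.one_apply, Matrix.of_apply, smul_eq_mul]
  have key : ∑ k : Fin (d+1), (if (k:ℕ) ≤ i then aa (i - k) else 0) *
      (if (j:ℕ) < k then b (k - j - 1) else 0)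
      = if (j:ℕ) < i then ∑ l ∈ range ((i:ℕ) - j), aa ((i:ℕ) - j - 1 - l) * b l else 0 := by
    rw [Fin.sum_univ_eq_sum_range
      (fun k => (if k ≤ (i:ℕ) then aa ((i:ℕ) - k) else 0) * (if (j:ℕ) < k then b (k - (j:ℕ) - 1) else 0))]
    by_cases hji : (j:ℕ) < i
    · rw [if_pos hji]
      have hsub : Finset.Ioc (j:ℕ) (i:ℕ) ⊆ range (d+1) := by
        intro k hk
        simp only [mem_Ioc] at hk
        exact mem_range.mpr (lt_of_le_of_lt hk.2 i.isLt)
      rw [← Finset.sum_subset hsub]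
      · rw [← Finset.Icc_succ_left_eq_Ioc, ← Finset.Ico_succ_right_eq_Icc, Order.succ_eq_add_one,
          Order.succ_eq_add_one, Finset.sum_Ico_eq_sum_range]
        have hlen : (i:ℕ) + 1 - ((j:ℕ)+1) = (i:ℕ) - j := by omega
        rw [hlen]
        apply Finset.sum_congr rfl
        intro l hl
        have hl' : l < (i:ℕ) - j := mem_range.mp hl
        rw [if_pos (by omega : (j:ℕ)+1+l ≤ (i:ℕ)), if_pos (by omega : (j:ℕ) < (j:ℕ)+1+l)]
        congr 2 <;> omega
      · intro k hk hnk
        simp only [mem_Ioc] at hnk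
        rcases Nat.lt_or_ge (i:ℕ) k with h | h
        · rw [if_neg (by omega : ¬ k ≤ (i:ℕ))]; ring
        · rw [if_neg (by omega : ¬ (j:ℕ) < k)]; ring
    · rw [if_neg hji]
      apply Finset.sum_eq_zero
      intro k hk
      rcases Nat.lt_or_ge (i:ℕ) k with h | h
      · rw [if_neg (by omega : ¬ k ≤ (i:ℕ))]; ring
      · rw [if_neg (by omega : ¬ (j:ℕ) < k)]; ring
  have split : ∑ k : Fin (d+1), (if (k:ℕ) ≤ (i:ℕ) then aa ((i:ℕ) - k) else 0) *
        ((if k = j then (1:ℂ) else 0) + (starRingEnd ℂ) γ * (if (j:ℕ) < k then b ((k:ℕ) - j - 1) else 0))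
      = (∑ k : Fin (d+1), (if (k:ℕ) ≤ (i:ℕ) then aa ((i:ℕ) - k) else 0) * (if k = j then (1:ℂ) else 0))
        + (starRingEnd ℂ) γ * ∑ k : Fin (d+1), (if (k:ℕ) ≤ (i:ℕ) then aa ((i:ℕ) - k) else 0) *
            (if (j:ℕ) < k then b ((k:ℕ) - j - 1) else 0) := by
    rw [Finset.mul_sum, ← Finset.sum_add_distrib]
    apply Finset.sum_congr rfl
    intro k _
    ring
  rw [split, key]
  rw [Finset.sum_eq_single j (fun k _ hk => by rw [if_neg hk, mul_zero]) (fun h => absurd (mem_univ j) h)]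
  rw [if_pos rfl, mul_one]
  rcases lt_trichotomy ((j:ℕ)) ((i:ℕ)) with h | h | h
  · rw [if_pos h.le, if_pos h, if_pos h, if_neg (Fin.ne_of_val_ne (by omega)), mul_zero, zero_add]
    have hm : (i:ℕ) - j = ((i:ℕ) - j - 1) + 1 := by omega
    rw [hm, Nat.add_sub_cancel, hrec ((i:ℕ)-j-1)]
  · rw [if_pos h.le, if_neg (by omega : ¬ (j:ℕ) < (i:ℕ)), if_neg (by omega : ¬ (j:ℕ) < (i:ℕ)),
      if_pos (Fin.ext h.symm : i = j)]
    have : (i:ℕ) - (j:ℕ) = 0 := by omega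
    rw [this, ha0]
    ring
  · rw [if_neg (by omega : ¬ (j:ℕ) ≤ (i:ℕ)), if_neg (by omega : ¬ (j:ℕ) < (i:ℕ)),
      if_neg (by omega : ¬ (j:ℕ) < (i:ℕ)), if_neg (Fin.ne_of_val_ne (by omega) : ¬ i = j)]
    ring

/-! ### Möbius norm inequalities -/

private lemma normSq_mob (γ w : ℂ) :
    ‖1 + (starRingEnd ℂ) γ * w‖^2 - ‖γ + w‖^2 = (1 - ‖γ‖^2) * (1 - ‖w‖^2) := by
  have h : ∀ z : ℂ, ‖z‖^2 = Complex.normSq z := fun z => by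
    rw [Complex.normSq_eq_norm_sq]
  rw [h, h, h, h]
  simp only [Complex.normSq_apply, Complex.add_re, Complex.add_im, Complex.mul_re, Complex.mul_im,
    Complex.one_re, Complex.one_im, Complex.conj_re, Complex.conj_im]
  ring

private lemma disc_ineq (γ w : ℂ) (hγ : ‖γ‖ ≤ 1) (hw : ‖w‖ ≤ 1) :
    ‖γ + w‖ ≤ ‖1 + (starRingEnd ℂ) γ * w‖ := by
  have h := normSq_mob γ w
  have ha : ‖γ‖^2 ≤ 1 := by nlinarith [norm_nonneg γ]
  have hb : ‖w‖^2 ≤ 1 := by nlinarith [norm_nonneg w]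
  have h0 : 0 ≤ (1 - ‖γ‖^2) * (1 - ‖w‖^2) := mul_nonneg (by linarith) (by linarith)
  have h1 : ‖γ + w‖^2 ≤ ‖1 + (starRingEnd ℂ) γ * w‖^2 := by linarith
  nlinarith [norm_nonneg (γ + w), norm_nonneg (1 + (starRingEnd ℂ) γ * w)]

private lemma one_add_ne (w : ℂ) (hw : ‖w‖ < 1) : 1 + w ≠ 0 := by
  intro h
  have : w = -1 := by linear_combination h
  rw [this] at hw; simp at hw

/-! ### Euclidean space helpers -/

private lemma euclid_apply {n : ℕ} (A : Matrix (Fin n) (Fin n) ℂ) (x : EuclideanSpace ℂ (Fin n))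
    (i : Fin n) : (Matrix.toEuclideanCLM (𝕜 := ℂ) A x) i = ∑ j, A i j * x j := by
  have h2 := congrFun (Matrix.ofLp_toEuclideanCLM (𝕜 := ℂ) A x) i
  simpa [Matrix.toLin'_apply, Matrix.mulVec, dotProduct] using h2

private lemma euclid_norm_sq {n : ℕ} (x : EuclideanSpace ℂ (Fin n)) : ‖x‖^2 = ∑ i, ‖x i‖^2 := by
  rw [EuclideanSpace.norm_eq, Real.sq_sqrt]
  exact Finset.sum_nonneg fun i _ => sq_nonneg _

private lemma contr_transfer {n : ℕ} (γ : ℂ) (A C : Matrix (Fin n) (Fin n) ℂ)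
    (hId : A * (1 + (starRingEnd ℂ) γ • C) = γ • 1 + C)
    (hA : ∀ x : EuclideanSpace ℂ (Fin n), ‖Matrix.toEuclideanCLM (𝕜 := ℂ) A x‖ ≤ ‖x‖)
    (hγ : ‖γ‖ < 1) :
    ∀ y : EuclideanSpace ℂ (Fin n), ‖Matrix.toEuclideanCLM (𝕜 := ℂ) C y‖ ≤ ‖y‖ := by
  intro y
  have hId' : Matrix.toEuclideanCLM (𝕜 := ℂ) A * (1 + (starRingEnd ℂ) γ • Matrix.toEuclideanCLM (𝕜 := ℂ) C)
      = γ • 1 + Matrix.toEuclideanCLM (𝕜 := ℂ) C := by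
    have := congrArg (Matrix.toEuclideanCLM (𝕜 := ℂ)) hId
    simpa [map_mul, map_add, map_smul, mul_smul_comm] using this
  set v := Matrix.toEuclideanCLM (𝕜 := ℂ) C y with hv
  have happ : Matrix.toEuclideanCLM (𝕜 := ℂ) A (y + (starRingEnd ℂ) γ • v) = γ • y + v := by
    have h6 := congrFun (congrArg DFunLike.coe hId') y
    simpa [ContinuousLinearMap.mul_apply, ContinuousLinearMap.add_apply,
      ContinuousLinearMap.smul_apply, ContinuousLinearMap.one_apply, hv] using h6
  have key : ‖y + (starRingEnd ℂ) γ • v‖^2 - ‖γ • y + v‖^2 = (1 - ‖γ‖^2) * (‖y‖^2 - ‖v‖^2) := by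
    rw [norm_add_sq (𝕜 := ℂ), norm_add_sq (𝕜 := ℂ), inner_smul_right (𝕜 := ℂ),
      inner_smul_left (𝕜 := ℂ), norm_smul, norm_smul]
    simp [RCLike.norm_conj, mul_pow]
    ring
  have hle := hA (y + (starRingEnd ℂ) γ • v)
  rw [happ] at hle
  have h2 : ‖γ • y + v‖^2 ≤ ‖y + (starRingEnd ℂ) γ • v‖^2 := by
    nlinarith [norm_nonneg (γ • y + v), norm_nonneg (y + (starRingEnd ℂ) γ • v)]
  have h3 : 0 ≤ (1 - ‖γ‖^2) * (‖y‖^2 - ‖v‖^2) := by linarith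
  have h4 : 0 < 1 - ‖γ‖^2 := by nlinarith [norm_nonneg γ]
  have h5 : ‖v‖^2 ≤ ‖y‖^2 := by nlinarith
  nlinarith [norm_nonneg v, norm_nonneg y]

private lemma sub_contr (d : ℕ) (b : ℕ → ℂ)
    (hC : ∀ y : EuclideanSpace ℂ (Fin (d+1)),
      ‖Matrix.toEuclideanCLM (𝕜 := ℂ)
        (Matrix.of fun i j : Fin (d+1) => if (j:ℕ) < i then b ((i:ℕ) - j - 1) else 0) y‖ ≤ ‖y‖) :
    ∀ x : EuclideanSpace ℂ (Fin d),
      ‖Matrix.toEuclideanCLM (𝕜 := ℂ)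
        (Matrix.of fun i j : Fin d => if (j:ℕ) ≤ i then b ((i:ℕ) - j) else 0) x‖ ≤ ‖x‖ := by
  intro x
  set C := Matrix.of fun i j : Fin (d+1) => if (j:ℕ) < i then b ((i:ℕ) - j - 1) else 0 with hCdef
  set B := Matrix.of fun i j : Fin d => if (j:ℕ) ≤ i then b ((i:ℕ) - j) else 0 with hBdef
  set xt : EuclideanSpace ℂ (Fin (d+1)) :=
    (WithLp.equiv 2 _).symm (fun j : Fin (d+1) => if h : (j:ℕ) < d then x ⟨(j:ℕ), h⟩ else 0) with hxt
  have hxtapp : ∀ j : Fin (d+1), xt j = if h : (j:ℕ) < d then x ⟨(j:ℕ), h⟩ else 0 := fun j => rfl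
  have hnorm : ‖xt‖ = ‖x‖ := by
    have h1 : ‖xt‖^2 = ‖x‖^2 := by
      rw [euclid_norm_sq, euclid_norm_sq, Fin.sum_univ_castSucc]
      have hlast : ‖xt (Fin.last d)‖^2 = 0 := by
        rw [hxtapp]; simp [Fin.last]
      rw [hlast, add_zero]
      apply Finset.sum_congr rfl
      intro i _
      rw [hxtapp]
      simp [Fin.castSucc, i.isLt]
    nlinarith [norm_nonneg xt, norm_nonneg x]
  have hcoord0 : (Matrix.toEuclideanCLM (𝕜 := ℂ) C xt) 0 = 0 := by
    rw [euclid_apply]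
    apply Finset.sum_eq_zero
    intro j _
    simp [hCdef]
  have hcoordS : ∀ i' : Fin d,
      (Matrix.toEuclideanCLM (𝕜 := ℂ) C xt) i'.succ = (Matrix.toEuclideanCLM (𝕜 := ℂ) B x) i' := by
    intro i'
    rw [euclid_apply, euclid_apply, Fin.sum_univ_castSucc]
    have hlast : C i'.succ (Fin.last d) * xt (Fin.last d) = 0 := by
      rw [hxtapp]; simp [Fin.last]
    rw [hlast, add_zero]
    apply Finset.sum_congr rfl
    intro j' _
    rw [hxtapp]
    have h1 : ((Fin.castSucc j' : Fin (d+1)) : ℕ) = (j' : ℕ) := rfl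
    have h2 : ((i'.succ : Fin (d+1)) : ℕ) = (i' : ℕ) + 1 := rfl
    simp only [hCdef, hBdef, Matrix.of_apply, h1, h2, j'.isLt, dif_pos, Fin.eta]
    by_cases hji : (j' : ℕ) ≤ (i' : ℕ)
    · rw [if_pos (by omega), if_pos hji]
      congr 2
      omega
    · rw [if_neg (by omega), if_neg hji]
  have hnorm2 : ‖Matrix.toEuclideanCLM (𝕜 := ℂ) C xt‖ = ‖Matrix.toEuclideanCLM (𝕜 := ℂ) B x‖ := by
    have h1 : ‖Matrix.toEuclideanCLM (𝕜 := ℂ) C xt‖^2 = ‖Matrix.toEuclideanCLM (𝕜 := ℂ) B x‖^2 := by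
      rw [euclid_norm_sq, euclid_norm_sq, Fin.sum_univ_succ, hcoord0]
      simp only [norm_zero, zero_pow, ne_eq, OfNat.ofNat_ne_zero, not_false_eq_true, zero_add]
      exact Finset.sum_congr rfl fun i' _ => by rw [hcoordS]
    nlinarith [norm_nonneg (Matrix.toEuclideanCLM (𝕜 := ℂ) C xt),
      norm_nonneg (Matrix.toEuclideanCLM (𝕜 := ℂ) B x)]
  rw [← hnorm2, ← hnorm]
  exact hC xt

private lemma col_bound (d : ℕ) (aa : ℕ → ℂ)
    (hA : ∀ x : EuclideanSpace ℂ (Fin (d+1)),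
      ‖Matrix.toEuclideanCLM (𝕜 := ℂ)
        (Matrix.of fun i j : Fin (d+1) => if (j:ℕ) ≤ i then aa ((i:ℕ) - j) else 0) x‖ ≤ ‖x‖) :
    ∑ i : Fin (d+1), ‖aa (i:ℕ)‖^2 ≤ 1 := by
  set A := Matrix.of fun i j : Fin (d+1) => if (j:ℕ) ≤ i then aa ((i:ℕ) - j) else 0 with hAdef
  set x : EuclideanSpace ℂ (Fin (d+1)) := EuclideanSpace.single 0 1 with hx
  have hxn : ‖x‖ = 1 := by rw [hx, EuclideanSpace.norm_single]; simp
  have happ : ∀ i, (Matrix.toEuclideanCLM (𝕜 := ℂ) A x) i = aa (i:ℕ) := by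
    intro i
    rw [euclid_apply]
    rw [Finset.sum_eq_single 0]
    · simp [hAdef, hx, EuclideanSpace.single_apply]
    · intro j _ hj
      simp [hx, EuclideanSpace.single_apply, hj]
    · intro h; exact absurd (mem_univ 0) h
  have hle := hA x
  rw [hxn] at hle
  have h2 : ‖Matrix.toEuclideanCLM (𝕜 := ℂ) A x‖^2 ≤ 1 := by
    nlinarith [norm_nonneg (Matrix.toEuclideanCLM (𝕜 := ℂ) A x)]
  rw [euclid_norm_sq] at h2
  calc ∑ i : Fin (d+1), ‖aa (i:ℕ)‖^2 = ∑ i, ‖(Matrix.toEuclideanCLM (𝕜 := ℂ) A x) i‖^2 :=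
        Finset.sum_congr rfl fun i _ => by rw [happ]
    _ ≤ 1 := h2
private lemma mainInd (d : ℕ) (aa : ℕ → ℂ)
    (hA : ∀ x : EuclideanSpace ℂ (Fin d),
      ‖Matrix.toEuclideanCLM (𝕜 := ℂ)
        (Matrix.of fun i j : Fin d => if (j:ℕ) ≤ i then aa ((i:ℕ) - j) else 0) x‖ ≤ ‖x‖) :
    ∃ φ : ℂ → ℂ, DifferentiableOn ℂ φ (Metric.ball 0 1) ∧
      (∀ z ∈ Metric.ball (0:ℂ) 1, ‖φ z‖ ≤ 1) ∧
      ∀ k, k < d → iteratedDeriv k φ 0 = (Nat.factorial k : ℂ) * aa k := by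
  induction d generalizing aa with
  | zero =>
      exact ⟨fun _ => 0, differentiableOn_const 0, fun z _ => by simp,
        fun k hk => absurd hk (Nat.not_lt_zero k)⟩
  | succ d ih =>
      set γ := aa 0 with hγdef
      by_cases hγ : ‖γ‖ < 1
      · -- Schur algorithm step
        have hne : 1 - γ * (starRingEnd ℂ) γ ≠ 0 := by
          have h1 : γ * (starRingEnd ℂ) γ = ((‖γ‖^2 : ℝ) : ℂ) := by
            rw [Complex.mul_conj']
            norm_num
          rw [h1]
          intro h
          have h2 : ((1 - ‖γ‖^2 : ℝ) : ℂ) = 0 := by push_cast at h ⊢; linear_combination h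
          have h3 : (1 - ‖γ‖^2 : ℝ) = 0 := by exact_mod_cast h2
          nlinarith [norm_nonneg γ]
        set b := schurB γ aa with hbdef
        have hrec := schurB_rec γ aa hne hγdef.symm
        have hId := matId d aa b γ hγdef.symm hrec
        have hC := contr_transfer γ _ _ hId hA hγ
        have hB := sub_contr d b hC
        obtain ⟨ψ, hψd, hψb, hψc⟩ := ih b hB
        set s : Set ℂ := Metric.ball (0:ℂ) 1 with hsdef
        have hs : IsOpen s := Metric.isOpen_ball
        have h0s : (0:ℂ) ∈ s := by rw [hsdef]; exact Metric.mem_ball_self one_pos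
        have hznorm : ∀ z ∈ s, ‖z‖ < 1 := fun z hz => by
          rw [hsdef] at hz; simpa using mem_ball_zero_iff.mp hz
        have hwle : ∀ z ∈ s, ‖z * ψ z‖ ≤ ‖z‖ := by
          intro z hz
          rw [norm_mul]
          have h1 := hψb z hz
          have h2 := norm_nonneg z
          nlinarith
        have hden : ∀ z ∈ s, (1 + (starRingEnd ℂ) γ * (z * ψ z)) ≠ 0 := by
          intro z hz
          apply one_add_ne
          rw [norm_mul, RCLike.norm_conj]
          have h1 := hwle z hz
          have h2 := hznorm z hz
          have h3 := norm_nonneg (z * ψ z)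
          nlinarith [norm_nonneg γ]
        set φf : ℂ → ℂ := fun z => (γ + z * ψ z) / (1 + (starRingEnd ℂ) γ * (z * ψ z)) with hφf
        set gf : ℂ → ℂ := fun z => 1 + (starRingEnd ℂ) γ * (z * ψ z) with hgf
        have hφd : DifferentiableOn ℂ φf s := by
          rw [hφf]
          apply DifferentiableOn.div
          · exact (differentiableOn_const γ).add (differentiableOn_id.mul hψd)
          · exact (differentiableOn_const 1).add
              ((differentiableOn_const _).mul (differentiableOn_id.mul hψd))
          · exact hden
        have hgd : DifferentiableOn ℂ gf s := by
          rw [hgf]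
          exact (differentiableOn_const 1).add
            ((differentiableOn_const _).mul (differentiableOn_id.mul hψd))
        have hφg : ∀ z ∈ s, φf z * gf z = γ + z * ψ z := by
          intro z hz
          rw [hφf, hgf]
          exact div_mul_cancel₀ _ (hden z hz)
        -- iterated derivatives of building blocks at 0
        have huder : ∀ m : ℕ, iteratedDeriv (m+1) (fun z : ℂ => z * ψ z) 0
            = ((m+1 : ℕ) : ℂ) * iteratedDeriv m ψ 0 := by
          intro m
          rw [iD_mul (f := fun w : ℂ => w) (g := ψ) hs differentiableOn_id hψd (m+1) 0 h0s]
          rw [Finset.sum_eq_single 1]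
          · rw [iD_id]
            norm_num
          · intro k hk hk1
            rw [iD_id]
            rcases Nat.eq_zero_or_pos k with h | h
            · subst h; simp
            · rw [if_neg (by omega), if_neg (by omega)]; ring
          · intro h; exact absurd (mem_range.mpr (by omega)) h
        have hg0 : iteratedDeriv 0 gf 0 = 1 := by
          rw [iteratedDeriv_zero, hgf]; simp
        have hgS : ∀ m : ℕ, iteratedDeriv (m+1) gf 0
            = (starRingEnd ℂ) γ * (((m+1 : ℕ) : ℂ) * iteratedDeriv m ψ 0) := by
          intro m
          rw [hgf]
          rw [iD_const_add, iD_const_mul]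
          simp only []
          rw [huder m]
        have coef : ∀ n, n < d + 1 → iteratedDeriv n φf 0 = (Nat.factorial n : ℂ) * aa n := by
          intro n
          induction n using Nat.strong_induction_on with
          | _ n IH =>
            intro hn
            cases n with
            | zero =>
                rw [iteratedDeriv_zero, hφf]
                simp [hγdef]
            | succ m =>
                have hmd : m < d := by omega
                have e2 : iteratedDeriv (m+1) (fun w => φf w * gf w) 0
                    = iteratedDeriv (m+1) (fun z : ℂ => γ + z * ψ z) 0 :=
                  iD_congr hs hφg (m+1) 0 h0s
                have e1 := iD_mul hs hφd hgd (m+1) 0 h0s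
                have e3 : iteratedDeriv (m+1) (fun z : ℂ => γ + z * ψ z) 0
                    = ((m+1 : ℕ) : ℂ) * iteratedDeriv m ψ 0 := by
                  rw [iD_const_add]
                  exact huder m
                have hEq : (∑ k ∈ range (m+1+1), ((m+1).choose k : ℂ) *
                      (iteratedDeriv k φf 0 * iteratedDeriv (m+1-k) gf 0))
                    = ((m+1 : ℕ) : ℂ) * iteratedDeriv m ψ 0 := e1.symm.trans (e2.trans e3)
                rw [Finset.sum_range_succ] at hEq
                rw [Nat.sub_self, Nat.choose_self, hg0] at hEq
                have hsum : (∑ k ∈ range (m+1), ((m+1).choose k : ℂ) *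
                      (iteratedDeriv k φf 0 * iteratedDeriv (m+1-k) gf 0))
                    = (Nat.factorial (m+1) : ℂ) * ((starRingEnd ℂ) γ *
                        ∑ l ∈ range (m+1), aa (m - l) * b l) := by
                  have stepA : ∀ k ∈ range (m+1), ((m+1).choose k : ℂ) *
                        (iteratedDeriv k φf 0 * iteratedDeriv (m+1-k) gf 0)
                      = (Nat.factorial (m+1) : ℂ) *
                          ((starRingEnd ℂ) γ * (aa k * b (m - k))) := by
                    intro k hk
                    have hkm : k ≤ m := Nat.lt_succ_iff.mp (mem_range.mp hk)
                    have hidx : m + 1 - k = (m - k) + 1 := by omega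
                    rw [hidx, hgS (m-k), hψc (m-k) (by omega), IH k (by omega) (by omega)]
                    have hfk : (((m+1).choose k : ℕ) : ℂ) * ((Nat.factorial k : ℕ) : ℂ) *
                        ((((m-k)+1 : ℕ) : ℂ) * ((Nat.factorial (m-k) : ℕ) : ℂ))
                        = ((Nat.factorial (m+1) : ℕ) : ℂ) := by
                      have hnat : (m+1).choose k * Nat.factorial k *
                          (((m-k)+1) * Nat.factorial (m-k)) = Nat.factorial (m+1) := by
                        have h1 : ((m-k)+1) * Nat.factorial (m-k) = Nat.factorial ((m-k)+1) :=
                          (Nat.factorial_succ (m-k)).symm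
                        rw [h1]
                        have h2 : (m - k) + 1 = (m+1) - k := by omega
                        rw [h2]
                        exact Nat.choose_mul_factorial_mul_factorial (by omega : k ≤ m+1)
                      exact_mod_cast congrArg (Nat.cast : ℕ → ℂ) hnat
                    linear_combination ((starRingEnd ℂ) γ * aa k * b (m - k)) * hfk
                  rw [Finset.sum_congr rfl stepA]
                  rw [← Finset.mul_sum, ← Finset.mul_sum]
                  congr 2
                  have hrefl := Finset.sum_range_reflect
                    (fun l => aa (m - l) * b l) (m+1)
                  rw [← hrefl]
                  apply Finset.sum_congr rfl
                  intro j hj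
                  have hjm : j ≤ m := Nat.lt_succ_iff.mp (mem_range.mp hj)
                  have h1 : m + 1 - 1 - j = m - j := by omega
                  rw [h1]
                  have h2 : m - (m - j) = j := by omega
                  rw [h2]
                rw [hsum, hψc m hmd] at hEq
                have hrecm := hrec m
                push_cast [Nat.factorial_succ] at hEq hrecm ⊢
                linear_combination hEq - ((m:ℂ)+1) * (Nat.factorial m : ℂ) * hrecm
        refine ⟨φf, hφd, ?_, coef⟩
        intro z hz
        rw [hφf]
        simp only []
        rw [norm_div]
        rw [div_le_one (norm_pos_iff.mpr (hden z hz))]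
        exact disc_ineq γ (z * ψ z) hγ.le (le_trans (hwle z hz) (hznorm z hz).le)
      · -- |γ| = 1 : degenerate case
        have hcol := col_bound d aa hA
        rw [Fin.sum_univ_succ] at hcol
        simp only [Fin.val_zero, Fin.val_succ] at hcol
        have hγ1 : 1 ≤ ‖γ‖ := not_lt.mp hγ
        have hγsq : 1 ≤ ‖aa 0‖^2 := by
          rw [← hγdef]; nlinarith
        have hrest : (∑ i : Fin d, ‖aa ((i:ℕ)+1)‖^2) ≤ 0 := by linarith
        have hzero : ∀ i : Fin d, aa ((i:ℕ)+1) = 0 := by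
          intro i
          have hle : ‖aa ((i:ℕ)+1)‖^2 ≤ ∑ j : Fin d, ‖aa ((j:ℕ)+1)‖^2 :=
            Finset.single_le_sum (f := fun j : Fin d => ‖aa ((j:ℕ)+1)‖^2) (fun j _ => sq_nonneg _) (mem_univ i)
          have h0 : ‖aa ((i:ℕ)+1)‖^2 ≤ 0 := le_trans hle hrest
          have h1 : ‖aa ((i:ℕ)+1)‖ = 0 := by nlinarith [norm_nonneg (aa ((i:ℕ)+1))]
          exact norm_eq_zero.mp h1
        refine ⟨fun _ => γ, differentiableOn_const γ, ?_, ?_⟩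
        · intro z hz
          have : ‖aa 0‖^2 ≤ 1 := by
            have : (0:ℝ) ≤ ∑ i : Fin d, ‖aa ((i:ℕ)+1)‖^2 :=
              Finset.sum_nonneg (fun j _ => sq_nonneg _)
            linarith
          rw [← hγdef] at this
          simp only []
          nlinarith [norm_nonneg γ]
        · intro k hk
          cases k with
          | zero =>
              rw [iteratedDeriv_zero]
              simp [hγdef]
          | succ m =>
              rw [iD_const]
              have hm : m < d := by omega
              have := hzero ⟨m, hm⟩
              simp only [] at this
              rw [this]
              simp

/-- Carathéodory–Schur interpolation. Let `A ∈ M_d(ℂ)` be the lower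
triangular Toeplitz matrix with entries `A i j = a_{i−j}` for `i ≥ j` and `0` otherwise,
and suppose `A` is a contraction in the ℓ²-operator norm (expressed via
`Matrix.toEuclideanCLM`).  Then there is a holomorphic function `φ` on the open unit disc,
bounded by `1`, whose Taylor coefficients at `0` satisfy `φ̂(k) = a_k` for `k = 0,…,d−1`
(the `k`-th Taylor coefficient being `iteratedDeriv k φ 0 / k!`). -/
theorem stmt14 {d : ℕ} (a : Fin d → ℂ) (A : Matrix (Fin d) (Fin d) ℂ)
    (hA : ∀ i j : Fin d, A i j =
      if h : (j : ℕ) ≤ (i : ℕ) then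
        a ⟨(i : ℕ) - (j : ℕ), Nat.lt_of_le_of_lt (Nat.sub_le _ _) i.isLt⟩
      else 0)
    (hcontr : ‖Matrix.toEuclideanCLM (𝕜 := ℂ) A‖ ≤ 1) :
    ∃ φ : ℂ → ℂ,
      DifferentiableOn ℂ φ (Metric.ball 0 1) ∧
      (∀ z ∈ Metric.ball (0 : ℂ) 1, ‖φ z‖ ≤ 1) ∧
      ∀ k : Fin d, iteratedDeriv (k : ℕ) φ 0 = (Nat.factorial (k : ℕ) : ℂ) * a k := by
  set aa : ℕ → ℂ := fun n => if h : n < d then a ⟨n, h⟩ else 0 with haa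
  have hAeq : A = Matrix.of fun i j : Fin d => if (j:ℕ) ≤ i then aa ((i:ℕ) - j) else 0 := by
    ext i j
    rw [hA i j, Matrix.of_apply]
    by_cases h : (j:ℕ) ≤ (i:ℕ)
    · rw [dif_pos h, if_pos h, haa]
      simp only []
      rw [dif_pos (Nat.lt_of_le_of_lt (Nat.sub_le _ _) i.isLt)]
    · rw [dif_neg h, if_neg h]
  have hA' : ∀ x : EuclideanSpace ℂ (Fin d),
      ‖Matrix.toEuclideanCLM (𝕜 := ℂ)
        (Matrix.of fun i j : Fin d => if (j:ℕ) ≤ i then aa ((i:ℕ) - j) else 0) x‖ ≤ ‖x‖ := by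
    intro x
    rw [← hAeq]
    calc ‖Matrix.toEuclideanCLM (𝕜 := ℂ) A x‖
        ≤ ‖Matrix.toEuclideanCLM (𝕜 := ℂ) A‖ * ‖x‖ := (Matrix.toEuclideanCLM (𝕜 := ℂ) A).le_opNorm x
      _ ≤ 1 * ‖x‖ := mul_le_mul_of_nonneg_right hcontr (norm_nonneg x)
      _ = ‖x‖ := one_mul _
  obtain ⟨φ, h1, h2, h3⟩ := mainInd d aa hA'
  refine ⟨φ, h1, h2, fun k => ?_⟩
  rw [h3 (k:ℕ) k.isLt]
  congr 1
  rw [haa]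
  simp only []
  rw [dif_pos k.isLt]
end
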